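/- arXiv:1907.04644 — 2 statements merged into one kernel-verified Lean document; each statement's English description precedes it below -/
import Mathlib

section
/- Let u ∈ ℝ^n with u > 0 entrywise and ‖u‖ = 1, set λ = λ(u), and let (Δ, δ) solve the Newton system at (u,λ) with r(u,λ) ≠ 0 (so that δ > 0). Let η > 0, and let M > 0 be such that for every θ ∈ (0,1], with w(θ) = u + θΔ and u'(θ) = w(θ)/‖w(θ)‖, one has ‖ r(u'(θ),λ) − ((1−θ)/‖w(θ)‖)·r(u,λ) − (θδ/‖w(θ)‖)·u ‖ ≤ M·θ²·‖Δ‖². If θ ∈ (0,1] satisfies θ·M·‖Δ‖²·(1+η)·‖w(θ)‖ ≤ η·δ·min(u), then r(u'(θ), λ) ≥ (θδ/((1+η)‖w(θ)‖))·u > 0 entrywise, and consequently λ(u'(θ)) > λ(u). -/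
open Matrix Finset

noncomputable def eucNorm {n : ℕ} (u : Fin n → ℝ) : ℝ := Real.sqrt (∑ i, u i ^ 2)

def IsZMatrix {n : ℕ} (B : Matrix (Fin n) (Fin n) ℝ) : Prop :=
  ∀ i j, i ≠ j → B i j ≤ 0

def IsIrreducibleMat {n : ℕ} (B : Matrix (Fin n) (Fin n) ℝ) : Prop :=
  ¬ ∃ S : Finset (Fin n), S.Nonempty ∧ S ≠ Finset.univ ∧
    ∀ i ∈ S, ∀ j ∉ S, B i j = 0

def IsNonsingularM {n : ℕ} (B : Matrix (Fin n) (Fin n) ℝ) : Prop :=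
  IsZMatrix B ∧ IsUnit B ∧ ∀ i j, 0 ≤ B⁻¹ i j

noncomputable def calA {n : ℕ} (A : Matrix (Fin n) (Fin n) ℝ) (Γ : ℝ) (a : Fin n → ℝ)
    (u : Fin n → ℝ) : Matrix (Fin n) (Fin n) ℝ :=
  A + Γ • Matrix.diagonal (fun i => 1 - 1 / (a i + u i ^ 2))

noncomputable def rvec {n : ℕ} (A : Matrix (Fin n) (Fin n) ℝ) (Γ : ℝ) (a : Fin n → ℝ)
    (u : Fin n → ℝ) (lam : ℝ) : Fin n → ℝ :=
  calA A Γ a u *ᵥ u - lam • u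

noncomputable def Jmat {n : ℕ} (A : Matrix (Fin n) (Fin n) ℝ) (Γ : ℝ) (a : Fin n → ℝ)
    (u : Fin n → ℝ) (lam : ℝ) : Matrix (Fin n) (Fin n) ℝ :=
  A + (Γ - lam) • (1 : Matrix (Fin n) (Fin n) ℝ)
    - Γ • Matrix.diagonal (fun i => (a i - u i ^ 2) / (a i + u i ^ 2) ^ 2)

noncomputable def lamOf {n : ℕ} [NeZero n] (A : Matrix (Fin n) (Fin n) ℝ) (Γ : ℝ)
    (a : Fin n → ℝ) (u : Fin n → ℝ) : ℝ :=
  ⨅ i, (calA A Γ a u *ᵥ u) i / u i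

def NewtonSystem {n : ℕ} (A : Matrix (Fin n) (Fin n) ℝ) (Γ : ℝ) (a : Fin n → ℝ)
    (u : Fin n → ℝ) (lam : ℝ) (Δ : Fin n → ℝ) (δ : ℝ) : Prop :=
  Jmat A Γ a u lam *ᵥ Δ - δ • u = -rvec A Γ a u lam ∧
  -(u ⬝ᵥ Δ) = -(1/2 * (u ⬝ᵥ u - 1))

noncomputable def wvec {n : ℕ} (u Δ : Fin n → ℝ) (θ : ℝ) : Fin n → ℝ := u + θ • Δ

noncomputable def unext {n : ℕ} (u Δ : Fin n → ℝ) (θ : ℝ) : Fin n → ℝ :=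
  (eucNorm (wvec u Δ θ))⁻¹ • wvec u Δ θ

lemma sqsum_nonneg {n : ℕ} (x : Fin n → ℝ) : 0 ≤ ∑ i, x i ^ 2 :=
  Finset.sum_nonneg fun _ _ => sq_nonneg _

lemma enorm_nonneg' {n : ℕ} (x : Fin n → ℝ) : 0 ≤ eucNorm x := Real.sqrt_nonneg _

lemma enorm_sq' {n : ℕ} (x : Fin n → ℝ) : eucNorm x ^ 2 = ∑ i, x i ^ 2 :=
  Real.sq_sqrt (sqsum_nonneg x)

lemma abs_le_enorm {n : ℕ} (x : Fin n → ℝ) (i : Fin n) : |x i| ≤ eucNorm x := by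
  rw [← Real.sqrt_sq_eq_abs]
  exact Real.sqrt_le_sqrt (Finset.single_le_sum (f := fun j => x j ^ 2)
    (fun j _ => sq_nonneg _) (Finset.mem_univ i))

set_option maxHeartbeats 1000000 in
theorem stmt_11 {n : ℕ} [NeZero n] (A : Matrix (Fin n) (Fin n) ℝ) (a : Fin n → ℝ) (Γ : ℝ)
    (ha : ∀ i, 0 < a i) (hΓ : 0 < Γ)
    (hA : IsNonsingularM A) (hAirr : IsIrreducibleMat A)
    (u : Fin n → ℝ) (hu : ∀ i, 0 < u i) (hnorm : eucNorm u = 1)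
    (Δ : Fin n → ℝ) (δ : ℝ)
    (hN : NewtonSystem A Γ a u (lamOf A Γ a u) Δ δ)
    (hr : rvec A Γ a u (lamOf A Γ a u) ≠ 0)
    (η : ℝ) (hη : 0 < η) (M : ℝ) (hM : 0 < M)
    (hbound : ∀ θ : ℝ, 0 < θ → θ ≤ 1 →
      eucNorm (rvec A Γ a (unext u Δ θ) (lamOf A Γ a u)
          - ((1 - θ) / eucNorm (wvec u Δ θ)) • rvec A Γ a u (lamOf A Γ a u)
          - (θ * δ / eucNorm (wvec u Δ θ)) • u) ≤ M * θ ^ 2 * eucNorm Δ ^ 2)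
    (θ : ℝ) (hθ0 : 0 < θ) (hθ1 : θ ≤ 1)
    (hcond : θ * M * eucNorm Δ ^ 2 * (1 + η) * eucNorm (wvec u Δ θ) ≤ η * δ * ⨅ i, u i) :
    (∀ i, θ * δ / ((1 + η) * eucNorm (wvec u Δ θ)) * u i ≤
        rvec A Γ a (unext u Δ θ) (lamOf A Γ a u) i) ∧
    (∀ i, 0 < rvec A Γ a (unext u Δ θ) (lamOf A Γ a u) i) ∧
    lamOf A Γ a u < lamOf A Γ a (unext u Δ θ) := by
  classical
  set lam := lamOf A Γ a u with hlam
  set Au := calA A Γ a u *ᵥ u with hAu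
  -- basic norm facts
  have husq : ∑ i, u i ^ 2 = 1 := by
    have h1 : eucNorm u ^ 2 = 1 := by rw [hnorm]; norm_num
    rwa [enorm_sq'] at h1
  have huu : u ⬝ᵥ u = 1 := by
    simpa [dotProduct, ← sq] using husq
  have hud : u ⬝ᵥ Δ = 0 := by
    have := hN.2
    rw [huu] at this
    linarith
  -- residual nonnegativity
  have hrapp : ∀ i, rvec A Γ a u lam i = Au i - lam * u i := by
    intro i; simp [rvec, hAu, hlam]
  have hr_nonneg : ∀ i, 0 ≤ rvec A Γ a u lam i := by
    intro i
    have h1 : lam ≤ Au i / u i :=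
      ciInf_le (Set.Finite.bddBelow (Set.finite_range _)) i
    have h2 : lam * u i ≤ Au i := by
      rw [le_div_iff₀ (hu i)] at h1; linarith
    rw [hrapp i]; linarith
  -- Δ ≠ 0
  have hΔne : Δ ≠ 0 := by
    intro h
    obtain ⟨k, hk⟩ := exists_eq_ciInf_of_finite (f := fun i => Au i / u i)
    have hk' : rvec A Γ a u lam k = 0 := by
      rw [hrapp k]
      have : lam = Au k / u k := hk.symm
      rw [this, div_mul_cancel₀ _ (ne_of_gt (hu k))]
      ring
    have h1 := hN.1
    rw [h] at h1
    have h2 := congrFun h1 k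
    simp only [Matrix.mulVec_zero, Pi.sub_apply, Pi.zero_apply, Pi.smul_apply,
      Pi.neg_apply, smul_eq_mul] at h2
    -- h2 : 0 - δ * u k = -(rvec ... k)
    have hδ0 : δ = 0 := by
      have := hu k
      rw [hk'] at h2
      have : δ * u k = 0 := by linarith
      rcases mul_eq_zero.mp this with h | h
      · exact h
      · exact absurd h (ne_of_gt (hu k))
    apply hr
    funext i
    have h3 := congrFun h1 i
    simp only [Matrix.mulVec_zero, Pi.sub_apply, Pi.zero_apply, Pi.smul_apply,
      Pi.neg_apply, smul_eq_mul, hδ0] at h3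
    simp only [Pi.zero_apply]
    linarith
  -- eucNorm Δ positive
  have hDpos : 0 < ∑ i, Δ i ^ 2 := by
    obtain ⟨i, hi⟩ := Function.ne_iff.mp hΔne
    exact Finset.sum_pos' (fun j _ => sq_nonneg _)
      ⟨i, Finset.mem_univ i, pow_two_pos_of_ne_zero hi⟩
  have hDsq : eucNorm Δ ^ 2 = ∑ i, Δ i ^ 2 := enorm_sq' Δ
  -- norms of wvec
  have hwapp : ∀ (t : ℝ) i, wvec u Δ t i = u i + t * Δ i := by
    intro t i; simp [wvec]
  have hwsq : ∀ t : ℝ, eucNorm (wvec u Δ t) ^ 2 = 1 + t ^ 2 * ∑ i, Δ i ^ 2 := by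
    intro t
    rw [enorm_sq']
    have : ∀ i, wvec u Δ t i ^ 2 = u i ^ 2 + (2 * t) * (u i * Δ i) + t ^ 2 * Δ i ^ 2 := by
      intro i; rw [hwapp]; ring
    rw [Finset.sum_congr rfl (fun i _ => this i), Finset.sum_add_distrib,
      Finset.sum_add_distrib, ← Finset.mul_sum, ← Finset.mul_sum, husq]
    have hud' : ∑ i, u i * Δ i = 0 := hud
    rw [hud']; ring
  have hNge1 : ∀ t : ℝ, 1 ≤ eucNorm (wvec u Δ t) := by
    intro t
    have h1 : (1 : ℝ) ≤ eucNorm (wvec u Δ t) ^ 2 := by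
      rw [hwsq]; nlinarith [sqsum_nonneg Δ]
    nlinarith [enorm_nonneg' (wvec u Δ t)]
  have hNmono : ∀ s t : ℝ, 0 ≤ s → s ≤ t → eucNorm (wvec u Δ s) ≤ eucNorm (wvec u Δ t) := by
    intro s t hs hst
    have h1 : eucNorm (wvec u Δ s) ^ 2 ≤ eucNorm (wvec u Δ t) ^ 2 := by
      rw [hwsq, hwsq]
      have hsq : s ^ 2 ≤ t ^ 2 := by nlinarith
      have := mul_le_mul_of_nonneg_right hsq (sqsum_nonneg Δ)
      linarith
    nlinarith [enorm_nonneg' (wvec u Δ s), enorm_nonneg' (wvec u Δ t)]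
  -- min of u
  have hminu_pos : 0 < ⨅ i, u i := by
    obtain ⟨k, hk⟩ := exists_eq_ciInf_of_finite (f := u)
    rw [← hk]; exact hu k
  have hminu_le : ∀ i, (⨅ j, u j) ≤ u i := fun i =>
    ciInf_le (Set.Finite.bddBelow (Set.finite_range _)) i
  -- δ > 0
  have hδpos : 0 < δ := by
    have hlhs : 0 < θ * M * eucNorm Δ ^ 2 * (1 + η) * eucNorm (wvec u Δ θ) := by
      have h1 : 0 < eucNorm Δ ^ 2 := by rw [hDsq]; exact hDpos
      have h2 : (0:ℝ) < 1 + η := by linarith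
      have h3 : 0 < eucNorm (wvec u Δ θ) := lt_of_lt_of_le one_pos (hNge1 θ)
      positivity
    by_contra hδ
    push_neg at hδ
    have h1 : η * δ * (⨅ i, u i) ≤ 0 := by
      have h2 := mul_pos hη hminu_pos
      nlinarith
    linarith
  -- KEY: lower bound on residual for all t ∈ (0, θ]
  have key : ∀ t : ℝ, 0 < t → t ≤ θ → ∀ i,
      t * δ / ((1 + η) * eucNorm (wvec u Δ t)) * u i ≤
        rvec A Γ a (unext u Δ t) lam i := by
    intro t ht0 htθ i
    set Nt := eucNorm (wvec u Δ t) with hNt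
    set Nθ := eucNorm (wvec u Δ θ) with hNθ
    have hNt1 : 1 ≤ Nt := hNge1 t
    have hNt0 : 0 < Nt := lt_of_lt_of_le one_pos hNt1
    have hNθ1 : 1 ≤ Nθ := hNge1 θ
    have hNtθ : Nt ≤ Nθ := hNmono t θ (le_of_lt ht0) htθ
    have hbt := hbound t ht0 (le_trans htθ hθ1)
    set E := rvec A Γ a (unext u Δ t) lam
        - ((1 - t) / Nt) • rvec A Γ a u lam - (t * δ / Nt) • u with hE
    have hEi : |E i| ≤ M * t ^ 2 * eucNorm Δ ^ 2 := (abs_le_enorm E i).trans hbt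
    have hEi' : -(M * t ^ 2 * eucNorm Δ ^ 2) ≤ E i := neg_le_of_abs_le hEi
    have hEdef : E i = rvec A Γ a (unext u Δ t) lam i
        - ((1 - t) / Nt) * rvec A Γ a u lam i - (t * δ / Nt) * u i := by
      simp [hE]
    have hre : 0 ≤ rvec A Γ a u lam i := hr_nonneg i
    -- goal after clearing denominators
    rw [div_mul_eq_mul_div, div_le_iff₀ (by positivity : (0:ℝ) < (1 + η) * Nt)]
    -- from hcond : θ * M * D2 * (1+η) * Nθ ≤ η * δ * min u ≤ η δ u i
    have hc1 : θ * M * eucNorm Δ ^ 2 * (1 + η) * Nθ ≤ η * δ * u i := by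
      have h1 := mul_le_mul_of_nonneg_left (hminu_le i)
        (le_of_lt (mul_pos hη hδpos))
      calc θ * M * eucNorm Δ ^ 2 * (1 + η) * Nθ ≤ η * δ * ⨅ j, u j := hcond
        _ ≤ η * δ * u i := by rw [mul_assoc]; rw [mul_assoc] at h1; exact h1
    have hc2 : t * M * eucNorm Δ ^ 2 * (1 + η) * Nt ≤ η * δ * u i := by
      have h1 : t * Nt ≤ θ * Nθ :=
        mul_le_mul htθ hNtθ (le_of_lt hNt0) (le_of_lt hθ0)
      have h2 := mul_le_mul_of_nonneg_left h1
        (by positivity : (0:ℝ) ≤ M * eucNorm Δ ^ 2 * (1 + η))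
      have h3 : M * eucNorm Δ ^ 2 * (1 + η) * (t * Nt)
          = t * M * eucNorm Δ ^ 2 * (1 + η) * Nt := by ring
      have h4 : M * eucNorm Δ ^ 2 * (1 + η) * (θ * Nθ)
          = θ * M * eucNorm Δ ^ 2 * (1 + η) * Nθ := by ring
      rw [h3, h4] at h2
      linarith
    -- rvec' i from E
    have hrv : rvec A Γ a (unext u Δ t) lam i
        = E i + ((1 - t) / Nt) * rvec A Γ a u lam i + (t * δ / Nt) * u i := by
      rw [hEdef]; ring
    rw [hrv]
    have ht1' : t ≤ 1 := le_trans htθ hθ1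
    have h2 : 0 ≤ ((1 - t) / Nt) * rvec A Γ a u lam i := by
      apply mul_nonneg _ hre
      apply div_nonneg (by linarith) (le_of_lt hNt0)
    have h3 : (t * δ / Nt) * u i * ((1 + η) * Nt) = t * δ * u i * (1 + η) := by
      field_simp
    have h4 : -(M * t ^ 2 * eucNorm Δ ^ 2) * ((1 + η) * Nt)
        ≤ E i * ((1 + η) * Nt) := by
      apply mul_le_mul_of_nonneg_right hEi' (by positivity)
    have h5 : t * (η * δ * u i) = t * δ * u i * (1 + η) - t * δ * u i := by ring
    have h6 : M * t ^ 2 * eucNorm Δ ^ 2 * ((1 + η) * Nt) ≤ t * (η * δ * u i) := by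
      have h7 := mul_le_mul_of_nonneg_left hc2 (le_of_lt ht0)
      have h8 : t * (t * M * eucNorm Δ ^ 2 * (1 + η) * Nt)
          = M * t ^ 2 * eucNorm Δ ^ 2 * ((1 + η) * Nt) := by ring
      rw [h8] at h7
      exact h7
    have h2' := mul_le_mul_of_nonneg_right h2
      (by positivity : (0:ℝ) ≤ (1 + η) * Nt)
    have hdistr : (E i + (1 - t) / Nt * rvec A Γ a u lam i + t * δ / Nt * u i)
          * ((1 + η) * Nt)
        = E i * ((1 + η) * Nt) + ((1 - t) / Nt * rvec A Γ a u lam i) * ((1 + η) * Nt)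
          + (t * δ / Nt * u i) * ((1 + η) * Nt) := by ring
    rw [hdistr, h3]
    linarith
  -- positivity of w(θ)
  have hwpos : ∀ i, 0 < wvec u Δ θ i := by
    by_contra hcon
    push_neg at hcon
    obtain ⟨i, hi⟩ := hcon
    rw [hwapp] at hi
    -- set of indices dead at θ
    set S : Finset (Fin n) := Finset.univ.filter (fun j => u j + θ * Δ j ≤ 0) with hS
    have hSne : S.Nonempty := ⟨i, by simp [hS, hi]⟩
    have hSneg : ∀ j ∈ S, Δ j < 0 := by
      intro j hj
      simp only [hS, Finset.mem_filter] at hj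
      nlinarith [hu j, hj.2]
    obtain ⟨i0, hi0S, hti0⟩ := Finset.exists_mem_eq_inf' hSne (fun j => u j / (-Δ j))
    set t := S.inf' hSne (fun j => u j / (-Δ j)) with ht
    have hΔi0 : Δ i0 < 0 := hSneg i0 hi0S
    have ht0 : 0 < t := by
      rw [hti0]; apply div_pos (hu i0); linarith
    have htθ : t ≤ θ := by
      have h1 : u i0 + θ * Δ i0 ≤ 0 := by
        have := hi0S; simp only [hS, Finset.mem_filter] at this; exact this.2
      rw [hti0, div_le_iff₀ (by linarith : (0:ℝ) < -Δ i0)]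
      nlinarith
    have hwt0 : wvec u Δ t i0 = 0 := by
      have h9 : Δ i0 ≠ 0 := ne_of_lt hΔi0
      rw [hwapp, hti0, div_mul_eq_mul_div, div_neg, mul_div_assoc, div_self h9,
        mul_one]
      ring
    have hwtge : ∀ j, 0 ≤ wvec u Δ t j := by
      intro j
      rw [hwapp]
      rcases le_or_gt 0 (Δ j) with h | h
      · nlinarith [hu j, ht0]
      · have hle : t ≤ u j / (-Δ j) := by
          by_cases hjS : j ∈ S
          · exact Finset.inf'_le _ hjS
          · have : ¬ (u j + θ * Δ j ≤ 0) := by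
              intro hc; exact hjS (by simp [hS, hc])
            push_neg at this
            have : θ ≤ u j / (-Δ j) := by
              rw [le_div_iff₀ (by linarith : (0:ℝ) < -Δ j)]; nlinarith
            linarith
        rw [le_div_iff₀ (by linarith : (0:ℝ) < -Δ j)] at hle
        nlinarith
    -- key at t gives positive residual at i0
    have hkey := key t ht0 htθ i0
    have hNt0 : 0 < eucNorm (wvec u Δ t) := lt_of_lt_of_le one_pos (hNge1 t)
    have hcpos : 0 < t * δ / ((1 + η) * eucNorm (wvec u Δ t)) * u i0 := by
      apply mul_pos _ (hu i0)
      apply div_pos (by positivity)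
      positivity
    -- but residual at i0 is nonpositive
    set v := unext u Δ t with hv
    have hvge : ∀ j, 0 ≤ v j := by
      intro j
      simp only [hv, unext, Pi.smul_apply, smul_eq_mul]
      exact mul_nonneg (by positivity) (hwtge j)
    have hvi0 : v i0 = 0 := by
      simp only [hv, unext, Pi.smul_apply, smul_eq_mul]
      rw [hwt0]; ring
    have hrle : rvec A Γ a v lam i0 ≤ 0 := by
      have hterm : ∀ j, calA A Γ a v i0 j * v j ≤ 0 := by
        intro j
        by_cases hji : j = i0
        · subst hji; rw [hvi0]; ring_nf; exact le_refl 0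
        · have hoff : calA A Γ a v i0 j = A i0 j := by
            simp [calA, Matrix.add_apply, Matrix.smul_apply,
              Matrix.diagonal_apply_ne' _ hji, smul_eq_mul]
          rw [hoff]
          exact mul_nonpos_of_nonpos_of_nonneg (hA.1 i0 j (Ne.symm hji)) (hvge j)
      have hsum : (calA A Γ a v *ᵥ v) i0 ≤ 0 := by
        rw [Matrix.mulVec, dotProduct]
        exact Finset.sum_nonpos fun j _ => hterm j
      have : rvec A Γ a v lam i0 = (calA A Γ a v *ᵥ v) i0 - lam * v i0 := by
        simp [rvec]
      rw [this, hvi0]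
      linarith
    linarith
  -- assemble conclusions
  have hNθ0 : 0 < eucNorm (wvec u Δ θ) := lt_of_lt_of_le one_pos (hNge1 θ)
  have hcthree : ∀ i, 0 < rvec A Γ a (unext u Δ θ) lam i := by
    intro i
    have hcpos : 0 < θ * δ / ((1 + η) * eucNorm (wvec u Δ θ)) * u i := by
      apply mul_pos _ (hu i)
      apply div_pos (by positivity)
      positivity
    exact lt_of_lt_of_le hcpos (key θ hθ0 le_rfl i)
  refine ⟨key θ hθ0 le_rfl, hcthree, ?_⟩
  set v := unext u Δ θ with hv
  have hvpos : ∀ i, 0 < v i := by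
    intro i
    simp only [hv, unext, Pi.smul_apply, smul_eq_mul]
    exact mul_pos (by positivity) (hwpos i)
  obtain ⟨k, hk⟩ := exists_eq_ciInf_of_finite (f := fun i => (calA A Γ a v *ᵥ v) i / v i)
  have : lamOf A Γ a v = (calA A Γ a v *ᵥ v) k / v k := hk.symm
  rw [this]
  have hrk := hcthree k
  have hrk' : rvec A Γ a v lam k = (calA A Γ a v *ᵥ v) k - lam * v k := by
    simp [rvec]
  rw [hrk'] at hrk
  rw [lt_div_iff₀ (hvpos k)]
  linarith
end

section
/- Let (u*, λ*) be an eigenpair with u* > 0 entrywise, ‖u*‖ = 1, and 𝒜(u*)u* = λ* u*. Then there exist constants ε > 0 and d > 0 such that for every u ∈ ℝ^n with u > 0 entrywise, ‖u‖ = 1, and ‖u − u*‖ + |λ(u) − λ*| < ε, the following holds: letting (Δ, δ) solve the Newton system at (u, λ(u)) and setting u' = (u + Δ)/‖u + Δ‖ (a full step with θ = 1), one has u' > 0 entrywise, ‖u' − u*‖ ≤ d·‖u − u*‖², and ‖u' − u*‖ + |λ(u') − λ*| ≤ d·(‖u − u*‖ + |λ(u) − λ*|)². -/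
open Matrix Finset

/-! ### Auxiliary lemmas about the Euclidean norm `eucNorm` -/

section EnormLemmas
variable {n : ℕ}

lemma eucNorm_eq_euc (u : Fin n → ℝ) :
    eucNorm u = ‖(WithLp.equiv 2 (Fin n → ℝ)).symm u‖ := by
  rw [EuclideanSpace.norm_eq]
  simp [eucNorm, Real.norm_eq_abs, sq_abs]

lemma eucNorm_nonneg (u : Fin n → ℝ) : 0 ≤ eucNorm u := Real.sqrt_nonneg _

lemma eucNorm_triangle (u v : Fin n → ℝ) : eucNorm (u + v) ≤ eucNorm u + eucNorm v := by
  simp only [eucNorm_eq_euc]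
  have : (WithLp.equiv 2 (Fin n → ℝ)).symm (u + v)
      = (WithLp.equiv 2 (Fin n → ℝ)).symm u + (WithLp.equiv 2 (Fin n → ℝ)).symm v := rfl
  rw [this]; exact norm_add_le _ _

lemma eucNorm_smul (c : ℝ) (u : Fin n → ℝ) : eucNorm (c • u) = |c| * eucNorm u := by
  simp only [eucNorm_eq_euc]
  have : (WithLp.equiv 2 (Fin n → ℝ)).symm (c • u)
      = c • (WithLp.equiv 2 (Fin n → ℝ)).symm u := rfl
  rw [this, norm_smul, Real.norm_eq_abs]

lemma eucNorm_neg (u : Fin n → ℝ) : eucNorm (-u) = eucNorm u := by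
  simp [eucNorm]

lemma eucNorm_sub_eucNorm_le (u v : Fin n → ℝ) : eucNorm u - eucNorm v ≤ eucNorm (u - v) := by
  simp only [eucNorm_eq_euc]
  have : (WithLp.equiv 2 (Fin n → ℝ)).symm (u - v)
      = (WithLp.equiv 2 (Fin n → ℝ)).symm u - (WithLp.equiv 2 (Fin n → ℝ)).symm v := rfl
  rw [this]; exact norm_sub_norm_le _ _

lemma pi_norm_le_eucNorm (u : Fin n → ℝ) : ‖u‖ ≤ eucNorm u := by
  rcases Nat.eq_zero_or_pos n with h | h
  · subst h; simp [eucNorm, Subsingleton.elim u 0]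
  · have : NeZero n := ⟨h.ne'⟩
    rw [pi_norm_le_iff_of_nonneg (eucNorm_nonneg u)]
    intro i
    rw [Real.norm_eq_abs, ← Real.sqrt_sq_eq_abs]
    exact Real.sqrt_le_sqrt (Finset.single_le_sum (f := fun j => u j ^ 2)
      (fun j _ => sq_nonneg _) (Finset.mem_univ i))

lemma eucNorm_le_sqrtn (u : Fin n → ℝ) : eucNorm u ≤ Real.sqrt n * ‖u‖ := by
  rw [← Real.sqrt_sq (norm_nonneg u), ← Real.sqrt_mul (by positivity)]
  apply Real.sqrt_le_sqrt
  calc ∑ i, u i ^ 2 ≤ ∑ _i : Fin n, ‖u‖ ^ 2 := by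
        refine Finset.sum_le_sum fun i _ => ?_
        have := norm_le_pi_norm u i
        have : |u i| ≤ ‖u‖ := by rwa [← Real.norm_eq_abs]
        nlinarith [abs_nonneg (u i), sq_abs (u i)]
    _ = n * ‖u‖ ^ 2 := by simp [Finset.sum_const, mul_comm]

lemma eucNorm_sq (u : Fin n → ℝ) : eucNorm u ^ 2 = ∑ i, u i ^ 2 := by
  rw [eucNorm, Real.sq_sqrt]; positivity

lemma eucNorm_pos {u : Fin n → ℝ} (i : Fin n) (h : u i ≠ 0) : 0 < eucNorm u := by
  rcases (eucNorm_nonneg u).lt_or_eq with h' | h'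
  · exact h'
  · exfalso
    have h2 : ∑ j, u j ^ 2 = 0 := by
      have := eucNorm_sq u
      rw [← h'] at this; simpa using this.symm
    have := (Finset.sum_eq_zero_iff_of_nonneg (fun j _ => sq_nonneg (u j))).1 h2 i
      (Finset.mem_univ i)
    exact h (by nlinarith)

end EnormLemmas

/-! ### Z-matrix / M-matrix lemmas -/

section ZMatrixLemmas
variable {n : ℕ}

lemma zmat_nonneg (B : Matrix (Fin n) (Fin n) ℝ) (hZ : ∀ i j, i ≠ j → B i j ≤ 0)
    (x : Fin n → ℝ) (hx : ∀ i, 0 < x i) (hBx : ∀ i, 0 < (B *ᵥ x) i)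
    (v : Fin n → ℝ) (hv : ∀ i, 0 ≤ (B *ᵥ v) i) : ∀ i, 0 ≤ v i := by
  rcases Nat.eq_zero_or_pos n with h | h
  · intro i; exact absurd i.2 (by omega)
  obtain ⟨i₀, -, hmin⟩ := Finset.exists_min_image Finset.univ (fun j => v j / x j)
    ⟨⟨0, h⟩, Finset.mem_univ _⟩
  set m := v i₀ / x i₀ with hm
  have hmle : ∀ j, m * x j ≤ v j := by
    intro j
    have h1 : m ≤ v j / x j := hmin j (Finset.mem_univ j)
    calc m * x j ≤ (v j / x j) * x j := by nlinarith [hx j]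
      _ = v j := by field_simp [(hx j).ne']
  by_cases hm0 : 0 ≤ m
  · intro i
    calc (0:ℝ) ≤ m * x i := mul_nonneg hm0 (hx i).le
      _ ≤ v i := hmle i
  · exfalso
    push_neg at hm0
    have key : (B *ᵥ v) i₀ ≤ m * (B *ᵥ x) i₀ := by
      have hterm : ∀ j, B i₀ j * v j ≤ B i₀ j * (m * x j) := by
        intro j
        by_cases hji : j = i₀
        · subst hji
          have : v j = m * x j := by rw [hm]; field_simp [(hx j).ne']
          rw [this]
        · exact mul_le_mul_of_nonpos_left (hmle j) (hZ i₀ j (fun h => hji h.symm))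
      calc (B *ᵥ v) i₀ = ∑ j, B i₀ j * v j := by simp [Matrix.mulVec, dotProduct]
        _ ≤ ∑ j, B i₀ j * (m * x j) := Finset.sum_le_sum fun j _ => hterm j
        _ = m * ∑ j, B i₀ j * x j := by rw [Finset.mul_sum]; congr 1; ext j; ring
        _ = m * (B *ᵥ x) i₀ := by simp [Matrix.mulVec, dotProduct]
    have : m * (B *ᵥ x) i₀ < 0 := mul_neg_of_neg_of_pos hm0 (hBx i₀)
    exact absurd (le_trans (hv i₀) key) (not_le.2 this)

lemma zmat_isUnit (B : Matrix (Fin n) (Fin n) ℝ) (hZ : ∀ i j, i ≠ j → B i j ≤ 0)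
    (x : Fin n → ℝ) (hx : ∀ i, 0 < x i) (hBx : ∀ i, 0 < (B *ᵥ x) i) :
    IsUnit B.det := by
  rw [isUnit_iff_ne_zero]
  intro hdet
  obtain ⟨v, hv, hBv⟩ := (Matrix.exists_mulVec_eq_zero_iff).2 hdet
  have h1 : ∀ i, 0 ≤ v i := zmat_nonneg B hZ x hx hBx v (fun i => by rw [hBv]; simp)
  have h2 : ∀ i, 0 ≤ (-v) i := zmat_nonneg B hZ x hx hBx (-v)
    (fun i => by rw [Matrix.mulVec_neg, hBv]; simp)
  apply hv
  funext i
  have ha := h1 i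
  have hb := h2 i
  simp only [Pi.neg_apply] at hb
  simp only [Pi.zero_apply]
  linarith

lemma mulVec_norm_bound (B : Matrix (Fin n) (Fin n) ℝ) :
    ∃ M : ℝ, 0 < M ∧ ∀ v : Fin n → ℝ, ‖B *ᵥ v‖ ≤ M * ‖v‖ := by
  refine ⟨(∑ i, ∑ j, |B i j|) + 1, by positivity, fun v => ?_⟩
  rw [pi_norm_le_iff_of_nonneg (by positivity)]
  intro i
  calc ‖(B *ᵥ v) i‖ = |∑ j, B i j * v j| := by simp [Matrix.mulVec, dotProduct]
    _ ≤ ∑ j, |B i j * v j| := Finset.abs_sum_le_sum_abs _ _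
    _ ≤ ∑ j, |B i j| * ‖v‖ := Finset.sum_le_sum fun j _ => by
        rw [abs_mul]
        exact mul_le_mul_of_nonneg_left
          (by rw [← Real.norm_eq_abs]; exact norm_le_pi_norm v j) (abs_nonneg _)
    _ = (∑ j, |B i j|) * ‖v‖ := by rw [Finset.sum_mul]
    _ ≤ ((∑ i, ∑ j, |B i j|) + 1) * ‖v‖ := by
        apply mul_le_mul_of_nonneg_right _ (norm_nonneg v)
        have := Finset.single_le_sum (f := fun i => ∑ j, |B i j|)
          (fun i _ => by positivity) (Finset.mem_univ i)
        linarith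

lemma abs_dot_le (x y : Fin n → ℝ) : |x ⬝ᵥ y| ≤ n * ‖x‖ * ‖y‖ := by
  calc |x ⬝ᵥ y| = |∑ j, x j * y j| := by simp [dotProduct]
    _ ≤ ∑ j, |x j * y j| := Finset.abs_sum_le_sum_abs _ _
    _ ≤ ∑ _j : Fin n, ‖x‖ * ‖y‖ := Finset.sum_le_sum fun j _ => by
        rw [abs_mul]
        exact mul_le_mul (by rw [← Real.norm_eq_abs]; exact norm_le_pi_norm x j)
          (by rw [← Real.norm_eq_abs]; exact norm_le_pi_norm y j) (abs_nonneg _) (norm_nonneg _)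
    _ = n * ‖x‖ * ‖y‖ := by simp [Finset.sum_const, mul_assoc]

lemma abs_dot_le' {bx by' : ℝ} (x y : Fin n → ℝ) (hx : ‖x‖ ≤ bx) (hy : ‖y‖ ≤ by') :
    |x ⬝ᵥ y| ≤ n * bx * by' := by
  have h0x : (0:ℝ) ≤ bx := le_trans (norm_nonneg x) hx
  have hn : (0:ℝ) ≤ n := Nat.cast_nonneg n
  calc |x ⬝ᵥ y| ≤ n * ‖x‖ * ‖y‖ := abs_dot_le x y
    _ ≤ n * bx * ‖y‖ :=
        mul_le_mul_of_nonneg_right (mul_le_mul_of_nonneg_left hx hn) (norm_nonneg y)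
    _ ≤ n * bx * by' := mul_le_mul_of_nonneg_left hy (by positivity)

end ZMatrixLemmas

/-! ### Generic small helpers -/

lemma newton_div_helper {x y c : ℝ} (hc : 0 < c) (h : x * (c/2) ≤ y) : x ≤ (2/c) * y := by
  have h2 : x * (c/2) * (2/c) ≤ y * (2/c) :=
    mul_le_mul_of_nonneg_right h (by positivity)
  have h3 : x * (c/2) * (2/c) = x := by field_simp
  rw [h3] at h2
  linarith

lemma abs_comb1 (x1 x2 x3 x4 : ℝ) : |x1 - x2 - x3 + x4| ≤ |x1| + |x2| + |x3| + |x4| := by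
  rw [abs_le]
  constructor <;>
    [skip; skip] <;>
    nlinarith [le_abs_self x1, neg_abs_le x1, le_abs_self x2, neg_abs_le x2,
      le_abs_self x3, neg_abs_le x3, le_abs_self x4, neg_abs_le x4]

lemma abs_comb2 (x1 x2 x3 x4 : ℝ) : |x1 + x2 - x3 + x4| ≤ |x1| + |x2| + |x3| + |x4| := by
  rw [abs_le]
  constructor <;>
    [skip; skip] <;>
    nlinarith [le_abs_self x1, neg_abs_le x1, le_abs_self x2, neg_abs_le x2,
      le_abs_self x3, neg_abs_le x3, le_abs_self x4, neg_abs_le x4]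

lemma norm_comb {V : Type*} [SeminormedAddCommGroup V] (x1 x2 x3 x4 : V) :
    ‖x1 + x2 + x3 - x4‖ ≤ ‖x1‖ + ‖x2‖ + ‖x3‖ + ‖x4‖ := by
  calc ‖x1 + x2 + x3 - x4‖ ≤ ‖x1 + x2 + x3‖ + ‖x4‖ := norm_sub_le _ _
    _ ≤ (‖x1 + x2‖ + ‖x3‖) + ‖x4‖ := by linarith [norm_add_le (x1 + x2) x3]
    _ ≤ ‖x1‖ + ‖x2‖ + ‖x3‖ + ‖x4‖ := by linarith [norm_add_le x1 x2]

/-! ### Problem-specific calculus lemmas -/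

section ProblemLemmas
variable {n : ℕ} (A : Matrix (Fin n) (Fin n) ℝ) (Γ : ℝ) (a : Fin n → ℝ)

noncomputable def gfun (a : Fin n → ℝ) (u : Fin n → ℝ) : Fin n → ℝ :=
  fun i => (a i - u i ^ 2) / (a i + u i ^ 2) ^ 2

noncomputable def fvec (A : Matrix (Fin n) (Fin n) ℝ) (Γ : ℝ) (a : Fin n → ℝ)
    (u : Fin n → ℝ) : Fin n → ℝ := fun i => (calA A Γ a u *ᵥ u) i / u i

lemma contDiff_gfun (ha : ∀ i, 0 < a i) : ContDiff ℝ 1 (gfun a (n := n)) := by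
  rw [contDiff_pi]
  intro i
  apply ContDiff.div
  · exact contDiff_const.sub ((contDiff_apply ℝ ℝ i).pow 2)
  · exact (contDiff_const.add ((contDiff_apply ℝ ℝ i).pow 2)).pow 2
  · intro u
    have := ha i
    positivity

lemma calA_mulVec (u v : Fin n → ℝ) (i : Fin n) :
    (calA A Γ a u *ᵥ v) i = (A *ᵥ v) i + Γ * ((1 - 1 / (a i + u i ^ 2)) * v i) := by
  simp [calA, Matrix.add_mulVec, Matrix.smul_mulVec, Matrix.mulVec_diagonal]

lemma Jmat_mulVec (u v : Fin n → ℝ) (lam : ℝ) (i : Fin n) :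
    (Jmat A Γ a u lam *ᵥ v) i
      = (A *ᵥ v) i + (Γ - lam) * v i - Γ * (gfun a u i * v i) := by
  simp [Jmat, gfun, Matrix.sub_mulVec, Matrix.add_mulVec, Matrix.smul_mulVec,
    Matrix.mulVec_diagonal, Matrix.one_mulVec]

lemma rvec_apply (ha : ∀ i, 0 < a i) (u : Fin n → ℝ) (lam : ℝ) (i : Fin n) :
    rvec A Γ a u lam i = (A *ᵥ u) i + Γ * u i - Γ * (u i / (a i + u i ^ 2)) - lam * u i := by
  have h : (0:ℝ) < a i + u i ^ 2 := by have := ha i; positivity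
  simp only [rvec, Pi.sub_apply, Pi.smul_apply, smul_eq_mul, calA_mulVec]
  field_simp
  ring

lemma hasDerivAt_scalar (c Γ lam t : ℝ) (hc : 0 < c) :
    HasDerivAt (fun t : ℝ => Γ * t - Γ * (t / (c + t ^ 2)) - lam * t)
      (Γ - lam - Γ * ((c - t ^ 2) / (c + t ^ 2) ^ 2)) t := by
  have hden : c + t ^ 2 ≠ 0 := by positivity
  have h1 : HasDerivAt (fun t : ℝ => t / (c + t ^ 2))
      ((c - t ^ 2) / (c + t ^ 2) ^ 2) t := by
    have := (hasDerivAt_id t).div ((hasDerivAt_const t c).add (hasDerivAt_pow 2 t)) hden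
    refine this.congr_deriv ?_
    simp only [Pi.add_apply, id]
    field_simp
    ring
  have h2 := ((hasDerivAt_id t).const_mul Γ).sub (h1.const_mul Γ)
  have h3 := h2.sub ((hasDerivAt_id t).const_mul lam)
  refine h3.congr_deriv ?_
  ring

lemma hasFDerivAt_rvec (ha : ∀ i, 0 < a i) (lam : ℝ) (u₀ : Fin n → ℝ) :
    HasFDerivAt (fun u => rvec A Γ a u lam)
      (LinearMap.toContinuousLinearMap (Matrix.mulVecLin (Jmat A Γ a u₀ lam))) u₀ := by
  rw [hasFDerivAt_pi']
  intro i
  have heq : (fun u : Fin n → ℝ => rvec A Γ a u lam i)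
      = fun u => (A *ᵥ u) i + (Γ * u i - Γ * (u i / (a i + u i ^ 2)) - lam * u i) := by
    funext u; rw [rvec_apply A Γ a ha]; ring
  rw [heq]
  have hA : HasFDerivAt (fun u : Fin n → ℝ => (A *ᵥ u) i)
      ((ContinuousLinearMap.proj i).comp
        (LinearMap.toContinuousLinearMap (Matrix.mulVecLin A))) u₀ :=
    ((ContinuousLinearMap.proj i).comp
        (LinearMap.toContinuousLinearMap (Matrix.mulVecLin A))).hasFDerivAt
  have hproj : HasFDerivAt (fun u : Fin n → ℝ => u i)
      (ContinuousLinearMap.proj i (R := ℝ) (φ := fun _ : Fin n => ℝ)) u₀ :=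
    hasFDerivAt_apply i u₀
  have hsc := (hasDerivAt_scalar (a i) Γ lam (u₀ i) (ha i)).comp_hasFDerivAt u₀ hproj
  have hcomb := hA.add hsc
  convert hcomb using 1
  · rfl
  apply ContinuousLinearMap.ext
  intro v
  simp only [ContinuousLinearMap.comp_apply, ContinuousLinearMap.proj_apply,
    LinearMap.coe_toContinuousLinearMap', Matrix.mulVecLin_apply,
    ContinuousLinearMap.add_apply, ContinuousLinearMap.coe_smul', Pi.smul_apply, smul_eq_mul]
  rw [Jmat_mulVec]
  simp only [gfun]
  ring

lemma contDiffAt_fvec (ha : ∀ i, 0 < a i) (u₀ : Fin n → ℝ) (hu₀ : ∀ i, u₀ i ≠ 0) :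
    ContDiffAt ℝ 1 (fvec A Γ a) u₀ := by
  rw [contDiffAt_pi]
  intro i
  apply ContDiffAt.div
  · have heq : (fun u : Fin n → ℝ => (calA A Γ a u *ᵥ u) i)
        = fun u => (∑ j, A i j * u j) + Γ * ((1 - 1 / (a i + u i ^ 2)) * u i) := by
      funext u
      rw [calA_mulVec]
      simp [Matrix.mulVec, dotProduct]
    rw [heq]
    apply ContDiffAt.add
    · exact (ContDiff.sum fun j _ => contDiff_const.mul (contDiff_apply ℝ ℝ j)).contDiffAt
    · apply ContDiffAt.mul contDiffAt_const
      apply ContDiffAt.mul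
      · apply ContDiffAt.sub contDiffAt_const
        apply ContDiffAt.div contDiffAt_const
        · exact (contDiff_const.add ((contDiff_apply ℝ ℝ i).pow 2)).contDiffAt
        · have := ha i; positivity
      · exact (contDiff_apply ℝ ℝ i).contDiffAt
  · exact (contDiff_apply ℝ ℝ i).contDiffAt
  · exact hu₀ i

lemma fvec_star (ustar : Fin n → ℝ) (lamstar : ℝ) (hustar : ∀ i, 0 < ustar i)
    (heig : calA A Γ a ustar *ᵥ ustar = lamstar • ustar) (i : Fin n) :
    fvec A Γ a ustar i = lamstar := by
  have h := hustar i
  rw [fvec, congrFun heig i]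
  simp only [Pi.smul_apply, smul_eq_mul]
  field_simp

lemma lamOf_bound [NeZero n] (u : Fin n → ℝ) (lamstar c : ℝ)
    (hb : ∀ i, |fvec A Γ a u i - lamstar| ≤ c) : |lamOf A Γ a u - lamstar| ≤ c := by
  have hne : Nonempty (Fin n) := ⟨⟨0, Nat.pos_of_ne_zero (NeZero.ne n)⟩⟩
  have hlam : lamOf A Γ a u = ⨅ i, fvec A Γ a u i := rfl
  rw [abs_le]
  constructor
  · have h : lamstar - c ≤ ⨅ i, fvec A Γ a u i := by
      apply le_ciInf
      intro i
      have := (abs_le.1 (hb i)).1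
      linarith
    rw [hlam]; linarith
  · obtain ⟨i⟩ := hne
    have h1 : (⨅ i, fvec A Γ a u i) ≤ fvec A Γ a u i :=
      ciInf_le (Set.Finite.bddBelow (Set.finite_range _)) i
    have := (abs_le.1 (hb i)).2
    rw [hlam]; linarith

lemma Jmat_diff_bound (hΓ : 0 < Γ) (u u' v : Fin n → ℝ) (lam lam' : ℝ) :
    ‖Jmat A Γ a u lam *ᵥ v - Jmat A Γ a u' lam' *ᵥ v‖
      ≤ (|lam - lam'| + Γ * ‖gfun a u - gfun a u'‖) * ‖v‖ := by
  rw [pi_norm_le_iff_of_nonneg (by positivity)]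
  intro i
  have h1 : (Jmat A Γ a u lam *ᵥ v - Jmat A Γ a u' lam' *ᵥ v) i
      = (lam' - lam) * v i - Γ * ((gfun a u i - gfun a u' i) * v i) := by
    simp only [Pi.sub_apply, Jmat, gfun, Matrix.sub_mulVec, Matrix.add_mulVec,
      Matrix.smul_mulVec, Matrix.mulVec_diagonal, Matrix.one_mulVec,
      Pi.smul_apply, smul_eq_mul, Pi.add_apply]
    ring
  rw [Real.norm_eq_abs, h1]
  have hv : |v i| ≤ ‖v‖ := by rw [← Real.norm_eq_abs]; exact norm_le_pi_norm v i
  have hg : |gfun a u i - gfun a u' i| ≤ ‖gfun a u - gfun a u'‖ := by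
    rw [← Real.norm_eq_abs]
    exact norm_le_pi_norm (gfun a u - gfun a u') i
  calc |(lam' - lam) * v i - Γ * ((gfun a u i - gfun a u' i) * v i)|
      ≤ |(lam' - lam) * v i| + |Γ * ((gfun a u i - gfun a u' i) * v i)| := abs_sub _ _
    _ = |lam - lam'| * |v i| + Γ * (|gfun a u i - gfun a u' i| * |v i|) := by
        rw [abs_mul, abs_mul, abs_mul, abs_sub_comm, abs_of_pos hΓ]
    _ ≤ |lam - lam'| * ‖v‖ + Γ * (‖gfun a u - gfun a u'‖ * ‖v‖) := by
        have h3 : |gfun a u i - gfun a u' i| * |v i| ≤ ‖gfun a u - gfun a u'‖ * ‖v‖ :=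
          mul_le_mul hg hv (abs_nonneg _) (norm_nonneg _)
        have h4 : |lam - lam'| * |v i| ≤ |lam - lam'| * ‖v‖ :=
          mul_le_mul_of_nonneg_left hv (abs_nonneg _)
        nlinarith [hΓ.le]
    _ = (|lam - lam'| + Γ * ‖gfun a u - gfun a u'‖) * ‖v‖ := by ring

lemma Jstar_mulVec_ustar (ha : ∀ i, 0 < a i) (ustar : Fin n → ℝ) (lamstar : ℝ)
    (heig : calA A Γ a ustar *ᵥ ustar = lamstar • ustar) (i : Fin n) :
    (Jmat A Γ a ustar lamstar *ᵥ ustar) i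
      = Γ * (2 * ustar i ^ 3 / (a i + ustar i ^ 2) ^ 2) := by
  have h1 := congrFun heig i
  rw [calA_mulVec] at h1
  simp only [Pi.smul_apply, smul_eq_mul] at h1
  have hA : (A *ᵥ ustar) i
      = lamstar * ustar i - Γ * ((1 - 1 / (a i + ustar i ^ 2)) * ustar i) := by
    linarith
  rw [Jmat_mulVec, hA, gfun]
  have hd : (0:ℝ) < a i + ustar i ^ 2 := by have := ha i; positivity
  field_simp
  ring

lemma taylor_bound (ha : ∀ i, 0 < a i) (hΓ : 0 < Γ) (lam C : ℝ)
    (ustar u : Fin n → ℝ)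
    (hC : ∀ z ∈ Metric.closedBall ustar ‖u - ustar‖, Γ * ‖gfun a z - gfun a u‖ ≤ C) :
    ‖rvec A Γ a ustar lam - rvec A Γ a u lam - Jmat A Γ a u lam *ᵥ (ustar - u)‖
      ≤ C * ‖ustar - u‖ := by
  set s := Metric.closedBall ustar ‖u - ustar‖ with hs
  have hC0 : 0 ≤ C :=
    le_trans (by positivity) (hC ustar (Metric.mem_closedBall_self (norm_nonneg _)))
  have hconv : Convex ℝ s := convex_closedBall _ _
  have hus : u ∈ s := by rw [hs, Metric.mem_closedBall, dist_eq_norm]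
  have hsts : ustar ∈ s := Metric.mem_closedBall_self (norm_nonneg _)
  have hmvt := hconv.norm_image_sub_le_of_norm_hasFDerivWithin_le'
    (f := fun z => rvec A Γ a z lam)
    (f' := fun z => LinearMap.toContinuousLinearMap (Matrix.mulVecLin (Jmat A Γ a z lam)))
    (φ := LinearMap.toContinuousLinearMap (Matrix.mulVecLin (Jmat A Γ a u lam)))
    (C := C)
    (fun z _ => (hasFDerivAt_rvec A Γ a ha lam z).hasFDerivWithinAt)
    (fun z hz => by
      apply ContinuousLinearMap.opNorm_le_bound _ hC0
      intro v
      have h1 : (LinearMap.toContinuousLinearMap (Matrix.mulVecLin (Jmat A Γ a z lam))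
          - LinearMap.toContinuousLinearMap (Matrix.mulVecLin (Jmat A Γ a u lam))) v
          = Jmat A Γ a z lam *ᵥ v - Jmat A Γ a u lam *ᵥ v := by
        simp [Matrix.mulVecLin_apply]
      rw [h1]
      calc ‖Jmat A Γ a z lam *ᵥ v - Jmat A Γ a u lam *ᵥ v‖
          ≤ (|lam - lam| + Γ * ‖gfun a z - gfun a u‖) * ‖v‖ :=
            Jmat_diff_bound A Γ a hΓ z u v lam lam
        _ ≤ C * ‖v‖ := by
            apply mul_le_mul_of_nonneg_right _ (norm_nonneg v)
            simpa using hC z hz)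
    hus hsts
  calc ‖rvec A Γ a ustar lam - rvec A Γ a u lam - Jmat A Γ a u lam *ᵥ (ustar - u)‖
      = ‖rvec A Γ a ustar lam - rvec A Γ a u lam
        - (LinearMap.toContinuousLinearMap (Matrix.mulVecLin (Jmat A Γ a u lam)))
            (ustar - u)‖ := by
        simp [Matrix.mulVecLin_apply]
    _ ≤ C * ‖ustar - u‖ := hmvt

end ProblemLemmas

set_option maxHeartbeats 4000000 in
theorem stmt_19 {n : ℕ} [NeZero n] (A : Matrix (Fin n) (Fin n) ℝ) (a : Fin n → ℝ) (Γ : ℝ)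
    (ha : ∀ i, 0 < a i) (hΓ : 0 < Γ)
    (hA : IsNonsingularM A) (hAirr : IsIrreducibleMat A)
    (ustar : Fin n → ℝ) (lamstar : ℝ)
    (hustar : ∀ i, 0 < ustar i) (hnormstar : eucNorm ustar = 1)
    (heig : calA A Γ a ustar *ᵥ ustar = lamstar • ustar) :
    ∃ (ε : ℝ) (d : ℝ), 0 < ε ∧ 0 < d ∧
      ∀ u : Fin n → ℝ, (∀ i, 0 < u i) → eucNorm u = 1 →
        eucNorm (u - ustar) + |lamOf A Γ a u - lamstar| < ε →
        ∀ (Δ : Fin n → ℝ) (δ : ℝ),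
          NewtonSystem A Γ a u (lamOf A Γ a u) Δ δ →
          (∀ i, 0 < ((eucNorm (u + Δ))⁻¹ • (u + Δ)) i) ∧
          eucNorm ((eucNorm (u + Δ))⁻¹ • (u + Δ) - ustar) ≤ d * eucNorm (u - ustar) ^ 2 ∧
          eucNorm ((eucNorm (u + Δ))⁻¹ • (u + Δ) - ustar)
              + |lamOf A Γ a ((eucNorm (u + Δ))⁻¹ • (u + Δ)) - lamstar| ≤
            d * (eucNorm (u - ustar) + |lamOf A Γ a u - lamstar|) ^ 2 := by
  classical
  have hn : 0 < n := Nat.pos_of_ne_zero (NeZero.ne n)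
  have hN1' : (1:ℝ) ≤ (n:ℝ) := by exact_mod_cast hn
  have hN0 : (0:ℝ) ≤ (n:ℝ) := by positivity
  obtain ⟨N, hNdef⟩ : ∃ x, x = (n:ℝ) := ⟨_, rfl⟩
  -- the Jacobian at the base point is a nonsingular M-matrix
  obtain ⟨J, hJdef⟩ : ∃ x, x = Jmat A Γ a ustar lamstar := ⟨_, rfl⟩
  have hJu : ∀ i, 0 < (J *ᵥ ustar) i := by
    intro i
    rw [hJdef, Jstar_mulVec_ustar A Γ a ha ustar lamstar heig i]
    have h1 := ha i; have h2 := hustar i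
    positivity
  have hZ : ∀ i j, i ≠ j → J i j ≤ 0 := by
    intro i j hij
    have hA0 : A i j ≤ 0 := hA.1 i j hij
    have hJij : J i j = A i j := by
      rw [hJdef]
      simp [Jmat, Matrix.one_apply_ne hij, Matrix.diagonal_apply_ne _ hij]
    rw [hJij]; exact hA0
  have hdet : IsUnit J.det := zmat_isUnit J hZ ustar hustar hJu
  obtain ⟨P, hPdef⟩ : ∃ x, x = J⁻¹ := ⟨_, rfl⟩
  have hPJ : P * J = 1 := by rw [hPdef]; exact Matrix.nonsing_inv_mul J hdet
  have hJP : J * P = 1 := by rw [hPdef]; exact Matrix.mul_nonsing_inv J hdet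
  obtain ⟨q, hqdef⟩ : ∃ x, x = P *ᵥ ustar := ⟨_, rfl⟩
  have hJq : J *ᵥ q = ustar := by
    rw [hqdef, Matrix.mulVec_mulVec, hJP, Matrix.one_mulVec]
  have hq0 : ∀ i, 0 ≤ q i :=
    zmat_nonneg J hZ ustar hustar hJu q (fun i => by rw [hJq]; exact (hustar i).le)
  obtain ⟨c₁, hc₁def⟩ : ∃ x, x = ustar ⬝ᵥ q := ⟨_, rfl⟩
  have hc₁ : 0 < c₁ := by
    have hqex : ∃ j, 0 < q j := by
      by_contra hcon
      push_neg at hcon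
      have hq_eq : q = 0 := funext fun j => le_antisymm (hcon j) (hq0 j)
      rw [hq_eq, Matrix.mulVec_zero] at hJq
      have h0 := congrFun hJq ⟨0, hn⟩
      rw [Pi.zero_apply] at h0
      exact absurd h0.symm (hustar ⟨0, hn⟩).ne'
    obtain ⟨j, hj⟩ := hqex
    calc (0:ℝ) < ustar j * q j := mul_pos (hustar j) hj
      _ ≤ ∑ i, ustar i * q i :=
          Finset.single_le_sum (fun i _ => mul_nonneg (hustar i).le (hq0 i)) (Finset.mem_univ j)
      _ = c₁ := hc₁def.symm
  -- base constants
  obtain ⟨M, hM, hMb⟩ := mulVec_norm_bound P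
  obtain ⟨Kg', tg, htg, hgl⟩ :=
    ((contDiff_gfun a ha).contDiffAt (x := ustar)).exists_lipschitzOnWith
  obtain ⟨rg, hrg, hballg⟩ := Metric.mem_nhds_iff.mp htg
  obtain ⟨Kf', tf, htf, hfl⟩ :=
    (contDiffAt_fvec A Γ a ha ustar (fun i => (hustar i).ne')).exists_lipschitzOnWith
  obtain ⟨rf, hrf, hballf⟩ := Metric.mem_nhds_iff.mp htf
  obtain ⟨KG, hKGdef⟩ : ∃ x, x = (Kg' : ℝ) := ⟨_, rfl⟩
  obtain ⟨KF, hKFdef⟩ : ∃ x, x = (Kf' : ℝ) := ⟨_, rfl⟩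
  have hKG0 : 0 ≤ KG := by rw [hKGdef]; exact Kg'.coe_nonneg
  have hKF0 : 0 ≤ KF := by rw [hKFdef]; exact Kf'.coe_nonneg
  have hgl' : ∀ x ∈ tg, ∀ y ∈ tg, dist (gfun a x) (gfun a y) ≤ KG * dist x y :=
    fun x hx y hy => by rw [hKGdef]; exact hgl.dist_le_mul x hx y hy
  have hfl' : ∀ x ∈ tf, ∀ y ∈ tf, dist (fvec A Γ a x) (fvec A Γ a y) ≤ KF * dist x y :=
    fun x hx y hy => by rw [hKFdef]; exact hfl.dist_le_mul x hx y hy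
  obtain ⟨U, hUdef⟩ : ∃ x, x = ‖ustar‖ := ⟨_, rfl⟩
  have hU0 : 0 ≤ U := by rw [hUdef]; exact norm_nonneg _
  obtain ⟨i₀, -, hi₀⟩ := Finset.exists_min_image Finset.univ ustar ⟨⟨0, hn⟩, Finset.mem_univ _⟩
  obtain ⟨mstar, hmdef⟩ : ∃ x, x = ustar i₀ := ⟨_, rfl⟩
  have hmstar : 0 < mstar := by rw [hmdef]; exact hustar i₀
  have hmle : ∀ i, mstar ≤ ustar i := fun i => by rw [hmdef]; exact hi₀ i (Finset.mem_univ i)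
  -- derived constants
  have hNpos : (0:ℝ) < N := by rw [hNdef]; exact lt_of_lt_of_le one_pos hN1'
  have hU1 : (0:ℝ) ≤ U + 1 := by linarith
  have h2c : (0:ℝ) ≤ 2/c₁ := by positivity
  obtain ⟨L1, hL1def⟩ : ∃ x, x = 2*Γ*KG := ⟨_, rfl⟩
  have hL10 : 0 ≤ L1 := by
    rw [hL1def]; exact mul_nonneg (by linarith) hKG0
  obtain ⟨K2, hK2def⟩ : ∃ x, x = 1 + Γ*KG := ⟨_, rfl⟩
  have hK20 : 0 < K2 := by
    rw [hK2def]
    have : 0 ≤ Γ*KG := mul_nonneg hΓ.le hKG0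
    linarith
  obtain ⟨CP, hCPdef⟩ : ∃ x, x = N*(U+1)*M := ⟨_, rfl⟩
  have hCP0 : 0 < CP := by
    rw [hCPdef]; exact mul_pos (mul_pos hNpos (by linarith)) hM
  obtain ⟨D1, hD1def⟩ : ∃ x, x = (2/c₁)*(N/2 + N*(U+1)*M*U + CP*L1) := ⟨_, rfl⟩
  have hD10 : 0 ≤ D1 := by
    rw [hD1def]
    have h1 : 0 ≤ CP*L1 := mul_nonneg hCP0.le hL10
    have h2 : 0 ≤ N*(U+1)*M*U := mul_nonneg (mul_nonneg (mul_nonneg hNpos.le hU1) hM.le) hU0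
    exact mul_nonneg h2c (by linarith)
  obtain ⟨D2, hD2def⟩ : ∃ x, x = (2/c₁)*(CP*K2) := ⟨_, rfl⟩
  have hD20 : 0 ≤ D2 := by
    rw [hD2def]; exact mul_nonneg h2c (mul_nonneg hCP0.le hK20.le)
  obtain ⟨E2, hE2def⟩ : ∃ x, x = D1*(M*(U+1)) + M*U + M*L1 := ⟨_, rfl⟩
  have hE20 : 0 ≤ E2 := by
    rw [hE2def]
    have h1 : 0 ≤ D1*(M*(U+1)) := mul_nonneg hD10 (mul_nonneg hM.le hU1)
    have h2 : 0 ≤ M*L1 := mul_nonneg hM.le hL10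
    have h3 : 0 ≤ M*U := mul_nonneg hM.le hU0
    linarith
  obtain ⟨E3, hE3def⟩ : ∃ x, x = D2*(M*(U+1)) + M*K2 := ⟨_, rfl⟩
  have hE30 : 0 ≤ E3 := by
    rw [hE3def]
    have h1 : 0 ≤ D2*(M*(U+1)) := mul_nonneg hD20 (mul_nonneg hM.le hU1)
    have h2 : 0 ≤ M*K2 := mul_nonneg hM.le hK20.le
    linarith
  obtain ⟨C3, hC3def⟩ : ∃ x, x = 2*E2 := ⟨_, rfl⟩
  have hC30 : 0 ≤ C3 := by rw [hC3def]; linarith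
  obtain ⟨C4, hC4def⟩ : ∃ x, x = (2/c₁)*(N/2 + CP + CP*L1 + CP*(K2*C3)) := ⟨_, rfl⟩
  have hC40 : 0 ≤ C4 := by
    rw [hC4def]
    have h1 : 0 ≤ CP*L1 := mul_nonneg hCP0.le hL10
    have h2 : 0 ≤ CP*(K2*C3) := mul_nonneg hCP0.le (mul_nonneg hK20.le hC30)
    exact mul_nonneg h2c (by linarith)
  obtain ⟨C5, hC5def⟩ : ∃ x, x = C4*(M*(U+1)) + M + M*L1 + M*(K2*C3) := ⟨_, rfl⟩
  have hC50 : 0 < C5 := by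
    rw [hC5def]
    have h1 : 0 ≤ C4*(M*(U+1)) := mul_nonneg hC40 (mul_nonneg hM.le hU1)
    have h2 : 0 ≤ M*L1 := mul_nonneg hM.le hL10
    have h3 : 0 ≤ M*(K2*C3) := mul_nonneg hM.le (mul_nonneg hK20.le hC30)
    linarith
  obtain ⟨CF, hCFdef⟩ : ∃ x, x = 2*Real.sqrt N*C5 := ⟨_, rfl⟩
  have hCF0 : 0 ≤ CF := by
    rw [hCFdef]
    exact mul_nonneg (mul_nonneg (by norm_num) (Real.sqrt_nonneg N)) hC50.le
  obtain ⟨T, hTdef⟩ : ∃ x, x = N*M*(2*U+1) + 1 := ⟨_, rfl⟩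
  have hT0 : 0 < T := by
    rw [hTdef]
    have : (0:ℝ) ≤ N*M*(2*U+1) := mul_nonneg (mul_nonneg hNpos.le hM.le) (by linarith)
    linarith
  obtain ⟨d, hddef⟩ : ∃ x, x = (CF+1)*(1+KF)^3 + 1 := ⟨_, rfl⟩
  have hd0 : 0 < d := by
    rw [hddef]
    have h1 : (0:ℝ) ≤ (CF+1)*(1+KF)^3 :=
      mul_nonneg (by linarith) (pow_nonneg (by linarith) 3)
    linarith
  set ε := min 1 (min rg (min rf (min (c₁/(2*T))
    (min (1/(2*(E3+1))) (min (mstar/(C5+1)) (rf/(CF+1))))))) with hεdef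
  have hε0 : 0 < ε := by
    rw [hεdef]
    have e1 : 0 < c₁/(2*T) := div_pos hc₁ (by linarith)
    have e2 : 0 < 1/(2*(E3+1)) := by positivity
    have e3 : 0 < mstar/(C5+1) := div_pos hmstar (by linarith)
    have e4 : 0 < rf/(CF+1) := div_pos hrf (by linarith)
    exact lt_min one_pos (lt_min hrg (lt_min hrf (lt_min e1 (lt_min e2 (lt_min e3 e4)))))
  have hεle1 : ε ≤ 1 := by rw [hεdef]; exact min_le_left _ _
  have hεrg : ε ≤ rg := by rw [hεdef]; exact le_trans (min_le_right _ _) (min_le_left _ _)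
  have hεrf : ε ≤ rf := by
    rw [hεdef]; exact le_trans (min_le_right _ _) (le_trans (min_le_right _ _) (min_le_left _ _))
  have hεc₁ : ε ≤ c₁/(2*T) := by
    rw [hεdef]; exact le_trans (min_le_right _ _) (le_trans (min_le_right _ _)
      (le_trans (min_le_right _ _) (min_le_left _ _)))
  have hεE3 : ε ≤ 1/(2*(E3+1)) := by
    rw [hεdef]; exact le_trans (min_le_right _ _) (le_trans (min_le_right _ _)
      (le_trans (min_le_right _ _) (le_trans (min_le_right _ _) (min_le_left _ _))))
  have hεm : ε ≤ mstar/(C5+1) := by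
    rw [hεdef]; exact le_trans (min_le_right _ _) (le_trans (min_le_right _ _)
      (le_trans (min_le_right _ _) (le_trans (min_le_right _ _)
        (le_trans (min_le_right _ _) (min_le_left _ _)))))
  have hεrfCF : ε ≤ rf/(CF+1) := by
    rw [hεdef]; exact le_trans (min_le_right _ _) (le_trans (min_le_right _ _)
      (le_trans (min_le_right _ _) (le_trans (min_le_right _ _)
        (le_trans (min_le_right _ _) (min_le_right _ _)))))
  refine ⟨ε, d, hε0, hd0, ?_⟩
  intro u hu hnorm hnear Δ δ hNS
  -- per-u setup
  set lam := lamOf A Γ a u with hlamdef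
  set e := u - ustar with hedef
  set ρ := eucNorm e + |lam - lamstar| with hρdef
  set v := u + Δ with hvdef
  set u' := (eucNorm v)⁻¹ • v with hu'def
  have hN1 := hNS.1
  have hN2 := hNS.2
  clear_value u'
  clear_value v
  clear_value ρ
  clear_value e
  clear_value lam
  obtain ⟨w, hwdef0⟩ : ∃ x, x = v - ustar := ⟨_, rfl⟩
  have hw_def : w = Δ + e := by rw [hwdef0, hvdef, hedef]; abel
  have hρ0 : 0 ≤ ρ := by rw [hρdef]; exact add_nonneg (eucNorm_nonneg e) (abs_nonneg _)
  have hρε : ρ < ε := hnear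
  have hρ1 : ρ ≤ 1 := le_trans hρε.le hεle1
  have hρsq : ρ^2 ≤ ρ := by
    have h := mul_le_mul_of_nonneg_right hρ1 hρ0
    calc ρ^2 = ρ*ρ := sq ρ
      _ ≤ 1*ρ := h
      _ = ρ := one_mul ρ
  have heρ : ‖e‖ ≤ ρ := by
    rw [hρdef]
    exact le_trans (pi_norm_le_eucNorm e) (le_add_of_nonneg_right (abs_nonneg _))
  have heucNorm_eρ : eucNorm e ≤ ρ := by rw [hρdef]; exact le_add_of_nonneg_right (abs_nonneg _)
  have hlmρ : |lam - lamstar| ≤ ρ := by rw [hρdef]; exact le_add_of_nonneg_left (eucNorm_nonneg e)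
  have huu : u ⬝ᵥ u = 1 := by
    have h1 : u ⬝ᵥ u = ∑ i, u i^2 := by
      simp [dotProduct, sq]
    have h2 := eucNorm_sq u
    rw [hnorm] at h2
    rw [h1, ← h2]
    norm_num
  have hss : ustar ⬝ᵥ ustar = 1 := by
    have h1 : ustar ⬝ᵥ ustar = ∑ i, ustar i^2 := by
      simp [dotProduct, sq]
    have h2 := eucNorm_sq ustar
    rw [hnormstar] at h2
    rw [h1, ← h2]
    norm_num
  have hΔ0 : u ⬝ᵥ Δ = 0 := by
    have := hN2
    simp only [neg_inj] at this
    rw [this, huu]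
    norm_num
  -- memberships
  have hstar_g : ustar ∈ tg := mem_of_mem_nhds htg
  have hstar_f : ustar ∈ tf := mem_of_mem_nhds htf
  have hdistu : dist u ustar ≤ ρ := by rw [dist_eq_norm, ← hedef]; exact heρ
  have hu_g : u ∈ tg := hballg (by
    rw [Metric.mem_ball]
    exact lt_of_le_of_lt hdistu (lt_of_lt_of_le hρε hεrg))
  have hu_f : u ∈ tf := hballf (by
    rw [Metric.mem_ball]
    exact lt_of_le_of_lt hdistu (lt_of_lt_of_le hρε hεrf))
  -- Taylor remainder
  obtain ⟨E₁, hE₁def⟩ :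
      ∃ x, x = rvec A Γ a ustar lam - rvec A Γ a u lam - Jmat A Γ a u lam *ᵥ (ustar - u) :=
    ⟨_, rfl⟩
  have bE : ‖E₁‖ ≤ L1*ρ^2 := by
    have hne : ‖u - ustar‖ ≤ ρ := by rw [← hedef]; exact heρ
    have hltrg : ‖u - ustar‖ < rg := lt_of_le_of_lt hne (lt_of_lt_of_le hρε hεrg)
    have htay := taylor_bound A Γ a ha hΓ lam (2*Γ*KG*‖u - ustar‖) ustar u (by
      intro z hz
      have hz_g : z ∈ tg := hballg (lt_of_le_of_lt (Metric.mem_closedBall.mp hz) hltrg)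
      have hdzu : dist z u ≤ 2*‖u - ustar‖ := by
        have h1 : dist z ustar ≤ ‖u - ustar‖ := Metric.mem_closedBall.mp hz
        have h2 : dist ustar u = ‖u - ustar‖ := by rw [dist_comm, dist_eq_norm]
        calc dist z u ≤ dist z ustar + dist ustar u := dist_triangle _ _ _
          _ ≤ 2*‖u - ustar‖ := by rw [h2] at *; linarith
      have hd := hgl' z hz_g u hu_g
      rw [dist_eq_norm] at hd
      calc Γ * ‖gfun a z - gfun a u‖ ≤ Γ * (KG * dist z u) :=
            mul_le_mul_of_nonneg_left hd hΓ.le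
        _ ≤ Γ * (KG * (2*‖u - ustar‖)) := by
            apply mul_le_mul_of_nonneg_left _ hΓ.le
            exact mul_le_mul_of_nonneg_left hdzu hKG0
        _ = 2*Γ*KG*‖u - ustar‖ := by ring)
    rw [← hE₁def] at htay
    calc ‖E₁‖ ≤ 2*Γ*KG*‖u - ustar‖*‖ustar - u‖ := htay
      _ = 2*Γ*KG*‖u - ustar‖*‖u - ustar‖ := by rw [norm_sub_rev ustar u]
      _ ≤ 2*Γ*KG*ρ*ρ := by
          have h0 : (0:ℝ) ≤ 2*Γ*KG := mul_nonneg (by linarith) hKG0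
          have h1 : 2*Γ*KG*‖u - ustar‖ ≤ 2*Γ*KG*ρ := mul_le_mul_of_nonneg_left hne h0
          have h2 : (0:ℝ) ≤ ‖u - ustar‖ := norm_nonneg _
          exact mul_le_mul h1 hne h2 (mul_nonneg h0 hρ0)
      _ = L1*ρ^2 := by rw [hL1def]; ring
  -- the perturbation term
  obtain ⟨Gv, hGvdef⟩ : ∃ x, x = Jmat A Γ a u lam *ᵥ w - J *ᵥ w := ⟨_, rfl⟩
  have bGv : ‖Gv‖ ≤ K2*(ρ*‖w‖) := by
    have hgu : ‖gfun a u - gfun a ustar‖ ≤ KG*ρ := by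
      have hd := hgl' u hu_g ustar hstar_g
      rw [dist_eq_norm] at hd
      calc ‖gfun a u - gfun a ustar‖ ≤ KG * dist u ustar := hd
        _ ≤ KG*ρ := mul_le_mul_of_nonneg_left hdistu hKG0
    have hJd := Jmat_diff_bound A Γ a hΓ u ustar w lam lamstar
    rw [← hJdef, ← hGvdef] at hJd
    calc ‖Gv‖ ≤ (|lam - lamstar| + Γ * ‖gfun a u - gfun a ustar‖) * ‖w‖ := hJd
      _ ≤ (ρ + Γ*(KG*ρ)) * ‖w‖ := by
          apply mul_le_mul_of_nonneg_right _ (norm_nonneg w)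
          have : Γ * ‖gfun a u - gfun a ustar‖ ≤ Γ*(KG*ρ) :=
            mul_le_mul_of_nonneg_left hgu hΓ.le
          linarith
      _ = K2*(ρ*‖w‖) := by rw [hK2def]; ring
  -- key linear identity
  have hJΔ : Jmat A Γ a u lam *ᵥ Δ = δ • u - rvec A Γ a u lam := by
    have h := sub_eq_iff_eq_add.mp hN1
    rw [h]; abel
  have hrstar : rvec A Γ a ustar lam = (lamstar - lam) • ustar := by
    rw [rvec, heig]; module
  have hkey : Jmat A Γ a u lam *ᵥ w = δ • u + (lam - lamstar) • ustar + E₁ := by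
    rw [hw_def, Matrix.mulVec_add, hJΔ, hE₁def, hrstar, hedef,
      Matrix.mulVec_sub, Matrix.mulVec_sub]
    module
  have hJw : J *ᵥ w = δ • u + (lam - lamstar) • ustar + E₁ - Gv := by
    have h : J *ᵥ w = Jmat A Γ a u lam *ᵥ w - Gv := by rw [hGvdef]; abel
    rw [h, hkey]
  obtain ⟨q1, hq1def⟩ : ∃ x, x = P *ᵥ u := ⟨_, rfl⟩
  have hw_eq : w = δ • q1 + (lam - lamstar) • q + P *ᵥ E₁ - P *ᵥ Gv := by
    have h := congrArg (fun y => P *ᵥ y) hJw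
    simp only [Matrix.mulVec_add, Matrix.mulVec_sub, Matrix.mulVec_smul] at h
    rw [Matrix.mulVec_mulVec, hPJ, Matrix.one_mulVec] at h
    rw [h, hq1def, hqdef]
  -- scalar equation
  have hdotw : u ⬝ᵥ w = e ⬝ᵥ e / 2 := by
    have h1 : u ⬝ᵥ w = u ⬝ᵥ Δ + (u ⬝ᵥ u - u ⬝ᵥ ustar) := by
      rw [hw_def, hedef, dotProduct_add, dotProduct_sub]
    have h2 : e ⬝ᵥ e = u ⬝ᵥ u - u ⬝ᵥ ustar - (ustar ⬝ᵥ u - ustar ⬝ᵥ ustar) := by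
      rw [hedef, dotProduct_sub, sub_dotProduct, sub_dotProduct,
        dotProduct_comm ustar u]
    have h3 : ustar ⬝ᵥ u = u ⬝ᵥ ustar := dotProduct_comm _ _
    rw [h1, hΔ0, huu]
    rw [h3, huu, hss] at h2
    linarith
  have heq2 : δ * (u ⬝ᵥ q1)
      = e ⬝ᵥ e / 2 - (lam - lamstar) * (u ⬝ᵥ q) - u ⬝ᵥ (P *ᵥ E₁) + u ⬝ᵥ (P *ᵥ Gv) := by
    have h := congrArg (fun z => u ⬝ᵥ z) hw_eq
    simp only [dotProduct_add, dotProduct_sub, dotProduct_smul,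
      smul_eq_mul] at h
    rw [hdotw] at h
    linarith
  -- norm bounds
  have hUnorm : ‖u‖ ≤ U + 1 := by
    have h1 : u = ustar + e := by rw [hedef]; abel
    calc ‖u‖ = ‖ustar + e‖ := by rw [← h1]
      _ ≤ ‖ustar‖ + ‖e‖ := norm_add_le _ _
      _ ≤ U + 1 := by
          rw [hUdef]
          have : ‖e‖ ≤ 1 := le_trans heρ hρ1
          linarith
  have hPdot : ∀ y : Fin n → ℝ, |u ⬝ᵥ (P *ᵥ y)| ≤ CP * ‖y‖ := by
    intro y
    have h := abs_dot_le' u (P *ᵥ y) hUnorm (hMb y)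
    calc |u ⬝ᵥ (P *ᵥ y)| ≤ N * (U+1) * (M * ‖y‖) := by rw [hNdef]; exact h
      _ = CP * ‖y‖ := by rw [hCPdef]; ring
  have hq1b : ‖q1‖ ≤ M*(U+1) := by
    rw [hq1def]
    exact le_trans (hMb u) (mul_le_mul_of_nonneg_left hUnorm hM.le)
  have hqb : ‖q‖ ≤ M*U := by
    rw [hqdef, hUdef]
    exact hMb ustar
  have hcuq : c₁/2 ≤ u ⬝ᵥ q1 := by
    have hiden : u ⬝ᵥ q1 - c₁ = e ⬝ᵥ (P *ᵥ u) + ustar ⬝ᵥ (P *ᵥ e) := by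
      rw [hq1def, hc₁def, hqdef, hedef, Matrix.mulVec_sub, sub_dotProduct,
        dotProduct_sub]
      ring
    have h1 : |e ⬝ᵥ (P *ᵥ u)| ≤ N * ρ * (M*(U+1)) := by
      rw [hNdef]
      exact abs_dot_le' e (P *ᵥ u) heρ (le_trans (hMb u) (mul_le_mul_of_nonneg_left hUnorm hM.le))
    have h2 : |ustar ⬝ᵥ (P *ᵥ e)| ≤ N * U * (M*ρ) := by
      have := abs_dot_le' ustar (P *ᵥ e) (le_of_eq hUdef.symm)
        (le_trans (hMb e) (mul_le_mul_of_nonneg_left heρ hM.le))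
      rw [hNdef]; exact this
    have h3 : N * ρ * (M*(U+1)) + N * U * (M*ρ) ≤ T*ρ := by
      have he1 : N * ρ * (M*(U+1)) + N * U * (M*ρ) = N*M*(2*U+1)*ρ := by ring
      have he2 : T*ρ = N*M*(2*U+1)*ρ + ρ := by rw [hTdef]; ring
      rw [he1, he2]; linarith
    have h4 : T*ρ ≤ c₁/2 := by
      have ha1 : T*ρ ≤ T*ε := mul_le_mul_of_nonneg_left hρε.le hT0.le
      have ha2 : T*ε ≤ T*(c₁/(2*T)) := mul_le_mul_of_nonneg_left hεc₁ hT0.le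
      have ha3 : T*(c₁/(2*T)) = c₁/2 := by field_simp
      linarith
    have h5 : |u ⬝ᵥ q1 - c₁| ≤ c₁/2 := by
      rw [hiden]
      calc |e ⬝ᵥ (P *ᵥ u) + ustar ⬝ᵥ (P *ᵥ e)|
          ≤ |e ⬝ᵥ (P *ᵥ u)| + |ustar ⬝ᵥ (P *ᵥ e)| := abs_add_le _ _
        _ ≤ c₁/2 := by linarith
    linarith [(abs_le.mp h5).1]
  -- a priori bound on δ
  have hupper : |δ * (u ⬝ᵥ q1)|
      ≤ (N/2 + N*(U+1)*M*U + CP*L1)*ρ + CP*K2*(ρ*‖w‖) := by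
    rw [heq2]
    have h1 : |e ⬝ᵥ e / 2| ≤ N*ρ*ρ/2 := by
      have hd := abs_dot_le' e e heρ heρ
      rw [← hNdef] at hd
      calc |e ⬝ᵥ e / 2| = |e ⬝ᵥ e|/2 := by rw [abs_div, abs_two]
        _ ≤ N*ρ*ρ/2 := by linarith
    have h2 : |(lam - lamstar) * (u ⬝ᵥ q)| ≤ ρ*(N*(U+1)*(M*U)) := by
      rw [abs_mul]
      have hd := abs_dot_le' u q hUnorm hqb
      rw [← hNdef] at hd
      exact mul_le_mul hlmρ hd (abs_nonneg _) hρ0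
    have h3 : |u ⬝ᵥ (P *ᵥ E₁)| ≤ CP*(L1*ρ^2) :=
      le_trans (hPdot E₁) (mul_le_mul_of_nonneg_left bE hCP0.le)
    have h4 : |u ⬝ᵥ (P *ᵥ Gv)| ≤ CP*(K2*(ρ*‖w‖)) :=
      le_trans (hPdot Gv) (mul_le_mul_of_nonneg_left bGv hCP0.le)
    have habs := abs_comb1 (e ⬝ᵥ e / 2) ((lam - lamstar) * (u ⬝ᵥ q))
      (u ⬝ᵥ (P *ᵥ E₁)) (u ⬝ᵥ (P *ᵥ Gv))
    have h5 : N*ρ*ρ/2 ≤ (N/2)*ρ := by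
      have hstep : (N/2)*ρ^2 ≤ (N/2)*ρ := mul_le_mul_of_nonneg_left hρsq (by linarith)
      have hexp : N*ρ*ρ/2 = (N/2)*ρ^2 := by ring
      linarith
    have h6 : CP*(L1*ρ^2) ≤ CP*L1*ρ := by
      have hstep : (CP*L1)*ρ^2 ≤ (CP*L1)*ρ :=
        mul_le_mul_of_nonneg_left hρsq (mul_nonneg hCP0.le hL10)
      have hexp : CP*(L1*ρ^2) = (CP*L1)*ρ^2 := by ring
      linarith
    calc |e ⬝ᵥ e / 2 - (lam - lamstar) * (u ⬝ᵥ q) - u ⬝ᵥ (P *ᵥ E₁) + u ⬝ᵥ (P *ᵥ Gv)|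
        ≤ |e ⬝ᵥ e / 2| + |(lam - lamstar) * (u ⬝ᵥ q)| + |u ⬝ᵥ (P *ᵥ E₁)|
          + |u ⬝ᵥ (P *ᵥ Gv)| := habs
      _ ≤ (N/2 + N*(U+1)*M*U + CP*L1)*ρ + CP*K2*(ρ*‖w‖) := by
          have hexp : ρ*(N*(U+1)*(M*U)) = (N*(U+1)*M*U)*ρ := by ring
          have hexp2 : CP*(K2*(ρ*‖w‖)) = CP*K2*(ρ*‖w‖) := by ring
          have hexp3 : (N/2 + N*(U+1)*M*U + CP*L1)*ρ
              = (N/2)*ρ + (N*(U+1)*M*U)*ρ + CP*L1*ρ := by ring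
          linarith [h1, h2, h3, h4, h5, h6]
  have bδ : |δ| ≤ D1*ρ + D2*(ρ*‖w‖) := by
    have hlow : |δ| * (c₁/2) ≤ |δ * (u ⬝ᵥ q1)| := by
      rw [abs_mul]
      apply mul_le_mul_of_nonneg_left _ (abs_nonneg δ)
      rw [abs_of_pos (lt_of_lt_of_le (half_pos hc₁) hcuq)]
      exact hcuq
    have hcomb := newton_div_helper hc₁ (le_trans hlow hupper)
    calc |δ| ≤ (2/c₁)*((N/2 + N*(U+1)*M*U + CP*L1)*ρ + CP*K2*(ρ*‖w‖)) := hcomb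
      _ = D1*ρ + D2*(ρ*‖w‖) := by rw [hD1def, hD2def]; ring
  -- a priori bound on w
  have bw1 : ‖w‖ ≤ |δ| * (M*(U+1)) + ρ*(M*U) + M*(L1*ρ^2) + M*(K2*(ρ*‖w‖)) := by
    have hnc := norm_comb (δ • q1) ((lam - lamstar) • q) (P *ᵥ E₁) (P *ᵥ Gv)
    have hb1 : ‖δ • q1‖ ≤ |δ| * (M*(U+1)) := by
      rw [norm_smul, Real.norm_eq_abs]
      exact mul_le_mul_of_nonneg_left hq1b (abs_nonneg δ)
    have hb2 : ‖(lam - lamstar) • q‖ ≤ ρ*(M*U) := by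
      rw [norm_smul, Real.norm_eq_abs]
      exact mul_le_mul hlmρ hqb (norm_nonneg q) hρ0
    have hb3 : ‖P *ᵥ E₁‖ ≤ M*(L1*ρ^2) :=
      le_trans (hMb E₁) (mul_le_mul_of_nonneg_left bE hM.le)
    have hb4 : ‖P *ᵥ Gv‖ ≤ M*(K2*(ρ*‖w‖)) :=
      le_trans (hMb Gv) (mul_le_mul_of_nonneg_left bGv hM.le)
    calc ‖w‖ = ‖δ • q1 + (lam - lamstar) • q + P *ᵥ E₁ - P *ᵥ Gv‖ := by rw [← hw_eq]
      _ ≤ ‖δ • q1‖ + ‖(lam - lamstar) • q‖ + ‖P *ᵥ E₁‖ + ‖P *ᵥ Gv‖ := hnc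
      _ ≤ |δ| * (M*(U+1)) + ρ*(M*U) + M*(L1*ρ^2) + M*(K2*(ρ*‖w‖)) := by linarith
  have hwC3 : ‖w‖ ≤ C3*ρ := by
    have h1 : |δ| * (M*(U+1)) ≤ (D1*ρ + D2*(ρ*‖w‖))*(M*(U+1)) :=
      mul_le_mul_of_nonneg_right bδ (mul_nonneg hM.le hU1)
    have h2 : M*(L1*ρ^2) ≤ M*(L1*ρ) := by
      have hstep : (M*L1)*ρ^2 ≤ (M*L1)*ρ :=
        mul_le_mul_of_nonneg_left hρsq (mul_nonneg hM.le hL10)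
      have hexp : M*(L1*ρ^2) = (M*L1)*ρ^2 := by ring
      have hexp2 : M*(L1*ρ) = (M*L1)*ρ := by ring
      linarith
    have hE3ρ : (D2*(M*(U+1)) + M*K2)*ρ ≤ 1/2 := by
      have hcoef : 0 ≤ D2*(M*(U+1)) + M*K2 := by
        have := mul_nonneg hD20 (mul_nonneg hM.le hU1)
        have := mul_nonneg hM.le hK20.le
        linarith
      have ha1 : (D2*(M*(U+1)) + M*K2)*ρ ≤ (D2*(M*(U+1)) + M*K2)*ε :=
        mul_le_mul_of_nonneg_left hρε.le hcoef
      have ha2 : (D2*(M*(U+1)) + M*K2)*ε ≤ (D2*(M*(U+1)) + M*K2)*(1/(2*(E3+1))) :=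
        mul_le_mul_of_nonneg_left hεE3 hcoef
      have ha3 : (D2*(M*(U+1)) + M*K2)*(1/(2*(E3+1))) ≤ 1/2 := by
        rw [← hE3def, mul_one_div, div_le_iff₀ (by linarith : (0:ℝ) < 2*(E3+1))]
        linarith
      linarith
    have h3 : (D2*(M*(U+1)) + M*K2)*(ρ*‖w‖) ≤ (1/2)*‖w‖ := by
      have hexp : (D2*(M*(U+1)) + M*K2)*(ρ*‖w‖) = ((D2*(M*(U+1)) + M*K2)*ρ)*‖w‖ := by ring
      rw [hexp]
      exact mul_le_mul_of_nonneg_right hE3ρ (norm_nonneg w)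
    have hbr : C3*ρ = 2*(D1*(M*(U+1))*ρ + M*U*ρ + M*L1*ρ) := by
      rw [hC3def, hE2def]; ring
    have hexp4 : (D1*ρ + D2*(ρ*‖w‖))*(M*(U+1))
        = D1*(M*(U+1))*ρ + D2*(M*(U+1))*(ρ*‖w‖) := by ring
    have hexp5 : ρ*(M*U) = M*U*ρ := by ring
    have hexp6 : M*(L1*ρ) = M*L1*ρ := by ring
    have hexp7 : M*(K2*(ρ*‖w‖)) = M*K2*(ρ*‖w‖) := by ring
    have hexp8 : (D2*(M*(U+1)) + M*K2)*(ρ*‖w‖)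
        = D2*(M*(U+1))*(ρ*‖w‖) + M*K2*(ρ*‖w‖) := by ring
    linarith
  -- refined bound on δ + (lam - lamstar)
  have hqq : u ⬝ᵥ q1 - u ⬝ᵥ q = u ⬝ᵥ (P *ᵥ e) := by
    rw [hq1def, hqdef, hedef, Matrix.mulVec_sub, dotProduct_sub]
  have heq3 : (δ + (lam - lamstar)) * (u ⬝ᵥ q1)
      = e ⬝ᵥ e / 2 + (lam - lamstar) * (u ⬝ᵥ (P *ᵥ e)) - u ⬝ᵥ (P *ᵥ E₁)
        + u ⬝ᵥ (P *ᵥ Gv) := by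
    linear_combination heq2 + (lam - lamstar) * hqq
  have b4 : |δ + (lam - lamstar)| ≤ C4*ρ^2 := by
    have h1 : |e ⬝ᵥ e / 2| ≤ (N/2)*ρ^2 := by
      have hd := abs_dot_le' e e heρ heρ
      rw [← hNdef] at hd
      have hexp : N*ρ*ρ = (N/2)*ρ^2*2 := by ring
      calc |e ⬝ᵥ e / 2| = |e ⬝ᵥ e|/2 := by rw [abs_div, abs_two]
        _ ≤ (N/2)*ρ^2 := by linarith
    have h2 : |(lam - lamstar) * (u ⬝ᵥ (P *ᵥ e))| ≤ CP*ρ^2 := by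
      rw [abs_mul]
      have hd : |u ⬝ᵥ (P *ᵥ e)| ≤ CP*ρ :=
        le_trans (hPdot e) (mul_le_mul_of_nonneg_left heρ hCP0.le)
      have := mul_le_mul hlmρ hd (abs_nonneg _) hρ0
      have hexp : ρ*(CP*ρ) = CP*ρ^2 := by ring
      linarith
    have h3 : |u ⬝ᵥ (P *ᵥ E₁)| ≤ CP*(L1*ρ^2) :=
      le_trans (hPdot E₁) (mul_le_mul_of_nonneg_left bE hCP0.le)
    have h4 : |u ⬝ᵥ (P *ᵥ Gv)| ≤ CP*(K2*C3)*ρ^2 := by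
      have hGv2 : ‖Gv‖ ≤ K2*(ρ*(C3*ρ)) := by
        have hstep : K2*(ρ*‖w‖) ≤ K2*(ρ*(C3*ρ)) := by
          apply mul_le_mul_of_nonneg_left _ hK20.le
          exact mul_le_mul_of_nonneg_left hwC3 hρ0
        linarith [bGv]
      have := le_trans (hPdot Gv) (mul_le_mul_of_nonneg_left hGv2 hCP0.le)
      have hexp : CP*(K2*(ρ*(C3*ρ))) = CP*(K2*C3)*ρ^2 := by ring
      linarith
    have habs := abs_comb2 (e ⬝ᵥ e / 2) ((lam - lamstar) * (u ⬝ᵥ (P *ᵥ e)))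
      (u ⬝ᵥ (P *ᵥ E₁)) (u ⬝ᵥ (P *ᵥ Gv))
    have hupper3 : |(δ + (lam - lamstar)) * (u ⬝ᵥ q1)|
        ≤ (N/2 + CP + CP*L1 + CP*(K2*C3))*ρ^2 := by
      rw [heq3]
      have hexp : (N/2 + CP + CP*L1 + CP*(K2*C3))*ρ^2
          = (N/2)*ρ^2 + CP*ρ^2 + CP*(L1*ρ^2) + CP*(K2*C3)*ρ^2 := by ring
      linarith
    have hlow : |δ + (lam - lamstar)| * (c₁/2) ≤ |(δ + (lam - lamstar)) * (u ⬝ᵥ q1)| := by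
      rw [abs_mul]
      apply mul_le_mul_of_nonneg_left _ (abs_nonneg _)
      rw [abs_of_pos (lt_of_lt_of_le (half_pos hc₁) hcuq)]
      exact hcuq
    have hcomb := newton_div_helper hc₁ (le_trans hlow hupper3)
    calc |δ + (lam - lamstar)| ≤ (2/c₁)*((N/2 + CP + CP*L1 + CP*(K2*C3))*ρ^2) := hcomb
      _ = C4*ρ^2 := by rw [hC4def]; ring
  -- refined bound on w
  have hw_eq2 : w = (δ + (lam - lamstar)) • q1 + (lam - lamstar) • (q - q1)
      + P *ᵥ E₁ - P *ᵥ Gv := by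
    rw [hw_eq]; module
  have hqmq : ‖q - q1‖ ≤ M*ρ := by
    have hq' : q - q1 = P *ᵥ (ustar - u) := by rw [hqdef, hq1def, Matrix.mulVec_sub]
    have hn' : ‖ustar - u‖ ≤ ρ := by rw [norm_sub_rev, ← hedef]; exact heρ
    rw [hq']
    exact le_trans (hMb _) (mul_le_mul_of_nonneg_left hn' hM.le)
  have bwfin : ‖w‖ ≤ C5*ρ^2 := by
    have hnc := norm_comb ((δ + (lam - lamstar)) • q1) ((lam - lamstar) • (q - q1))
      (P *ᵥ E₁) (P *ᵥ Gv)
    have hb1 : ‖(δ + (lam - lamstar)) • q1‖ ≤ (C4*ρ^2)*(M*(U+1)) := by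
      rw [norm_smul, Real.norm_eq_abs]
      exact mul_le_mul b4 hq1b (norm_nonneg q1)
        (mul_nonneg hC40 (sq_nonneg ρ))
    have hb2 : ‖(lam - lamstar) • (q - q1)‖ ≤ ρ*(M*ρ) := by
      rw [norm_smul, Real.norm_eq_abs]
      exact mul_le_mul hlmρ hqmq (norm_nonneg _) hρ0
    have hb3 : ‖P *ᵥ E₁‖ ≤ M*(L1*ρ^2) :=
      le_trans (hMb E₁) (mul_le_mul_of_nonneg_left bE hM.le)
    have hb4 : ‖P *ᵥ Gv‖ ≤ M*(K2*(ρ*(C3*ρ))) := by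
      have hGv2 : ‖Gv‖ ≤ K2*(ρ*(C3*ρ)) := by
        have hstep : K2*(ρ*‖w‖) ≤ K2*(ρ*(C3*ρ)) := by
          apply mul_le_mul_of_nonneg_left _ hK20.le
          exact mul_le_mul_of_nonneg_left hwC3 hρ0
        linarith [bGv]
      exact le_trans (hMb Gv) (mul_le_mul_of_nonneg_left hGv2 hM.le)
    have hbr : C5*ρ^2 = (C4*ρ^2)*(M*(U+1)) + ρ*(M*ρ) + M*(L1*ρ^2)
        + M*(K2*(ρ*(C3*ρ))) := by rw [hC5def]; ring
    calc ‖w‖ = ‖(δ + (lam - lamstar)) • q1 + (lam - lamstar) • (q - q1)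
        + P *ᵥ E₁ - P *ᵥ Gv‖ := by rw [← hw_eq2]
      _ ≤ ‖(δ + (lam - lamstar)) • q1‖ + ‖(lam - lamstar) • (q - q1)‖
          + ‖P *ᵥ E₁‖ + ‖P *ᵥ Gv‖ := hnc
      _ ≤ C5*ρ^2 := by linarith
  -- w is small
  have hwsmall : ‖w‖ < mstar := by
    have h1 : C5*ρ^2 ≤ C5*ρ := mul_le_mul_of_nonneg_left hρsq hC50.le
    have h2 : C5*ρ ≤ C5*ε := mul_le_mul_of_nonneg_left hρε.le hC50.le
    have h3 : C5*ε ≤ C5*(mstar/(C5+1)) := mul_le_mul_of_nonneg_left hεm hC50.le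
    have h4 : C5*(mstar/(C5+1)) < mstar := by
      rw [mul_div_assoc'] at *
      rw [div_lt_iff₀ (by linarith : (0:ℝ) < C5+1)]
      have hexp : mstar*(C5+1) = C5*mstar + mstar := by ring
      linarith
    linarith [bwfin]
  -- positivity of v and u'
  have hvw : v = ustar + w := by rw [hwdef0]; abel
  have hvpos : ∀ i, 0 < v i := by
    intro i
    have h1 : |w i| ≤ ‖w‖ := by
      rw [← Real.norm_eq_abs]; exact norm_le_pi_norm w i
    have h2 : v i = ustar i + w i := by rw [hvw]; rfl
    have h3 := hmle i
    have h4 := neg_abs_le (w i)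
    rw [h2]
    linarith
  have henv_pos : 0 < eucNorm v := eucNorm_pos ⟨0, hn⟩ (hvpos ⟨0, hn⟩).ne'
  have hgoal1 : ∀ i, 0 < u' i := by
    intro i
    rw [hu'def]
    have : ((eucNorm v)⁻¹ • v) i = (eucNorm v)⁻¹ * v i := rfl
    rw [this]
    exact mul_pos (inv_pos.mpr henv_pos) (hvpos i)
  -- distance from u' to ustar
  have henw : eucNorm (v - ustar) = eucNorm w := by rw [← hwdef0]
  have henv1 : |eucNorm v - 1| ≤ eucNorm w := by
    have h1 : eucNorm v - eucNorm ustar ≤ eucNorm (v - ustar) := eucNorm_sub_eucNorm_le v ustar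
    have h2 : eucNorm ustar - eucNorm v ≤ eucNorm (ustar - v) := eucNorm_sub_eucNorm_le ustar v
    have h3 : eucNorm (ustar - v) = eucNorm w := by
      have : ustar - v = -(v - ustar) := by abel
      rw [this, eucNorm_neg, henw]
    rw [henw] at h1
    rw [h3] at h2
    rw [hnormstar] at h1 h2
    rw [abs_le]
    constructor <;> linarith
  have hu'err : eucNorm (u' - ustar) ≤ 2 * eucNorm w := by
    have hsplit : u' - ustar = ((eucNorm v)⁻¹ - 1) • v + w := by
      rw [hu'def]
      have h : (eucNorm v)⁻¹ • v - ustar = ((eucNorm v)⁻¹ - 1) • v + (v - ustar) := by module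
      rw [h, ← hwdef0]
    have h1 : eucNorm (((eucNorm v)⁻¹ - 1) • v) ≤ eucNorm w := by
      rw [eucNorm_smul]
      have h2 : |(eucNorm v)⁻¹ - 1| * eucNorm v = |(eucNorm v)⁻¹ * eucNorm v - eucNorm v| := by
        have habs := abs_mul ((eucNorm v)⁻¹ - 1) (eucNorm v)
        rw [abs_of_pos henv_pos] at habs
        rw [← habs]
        congr 1
        ring
      rw [h2, inv_mul_cancel₀ henv_pos.ne']
      calc |1 - eucNorm v| = |eucNorm v - 1| := abs_sub_comm _ _
        _ ≤ eucNorm w := henv1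
    calc eucNorm (u' - ustar) = eucNorm (((eucNorm v)⁻¹ - 1) • v + w) := by rw [hsplit]
      _ ≤ eucNorm (((eucNorm v)⁻¹ - 1) • v) + eucNorm w := eucNorm_triangle _ _
      _ ≤ 2 * eucNorm w := by linarith
  have henw2 : eucNorm w ≤ Real.sqrt N * (C5*ρ^2) := by
    have h1 := eucNorm_le_sqrtn w
    rw [← hNdef] at h1
    calc eucNorm w ≤ Real.sqrt N * ‖w‖ := h1
      _ ≤ Real.sqrt N * (C5*ρ^2) :=
          mul_le_mul_of_nonneg_left bwfin (Real.sqrt_nonneg N)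
  have hu'CF : eucNorm (u' - ustar) ≤ CF * ρ^2 := by
    calc eucNorm (u' - ustar) ≤ 2 * eucNorm w := hu'err
      _ ≤ 2 * (Real.sqrt N * (C5*ρ^2)) := by linarith
      _ = CF * ρ^2 := by rw [hCFdef]; ring
  -- Lipschitz control of lamOf near ustar
  have hlamlip : ∀ z : Fin n → ℝ, z ∈ tf → |lamOf A Γ a z - lamstar| ≤ KF * eucNorm (z - ustar) := by
    intro z hz
    apply lamOf_bound
    intro i
    have hst := fvec_star A Γ a ustar lamstar hustar heig i
    have hd := hfl' z hz ustar hstar_f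
    have h1 : |fvec A Γ a z i - lamstar| ≤ ‖fvec A Γ a z - fvec A Γ a ustar‖ := by
      rw [← hst]
      have : fvec A Γ a z i - fvec A Γ a ustar i = (fvec A Γ a z - fvec A Γ a ustar) i := rfl
      rw [this, ← Real.norm_eq_abs]
      exact norm_le_pi_norm _ i
    have h2 : ‖fvec A Γ a z - fvec A Γ a ustar‖ = dist (fvec A Γ a z) (fvec A Γ a ustar) :=
      (dist_eq_norm _ _).symm
    have h3 : dist z ustar ≤ eucNorm (z - ustar) := by
      rw [dist_eq_norm]; exact pi_norm_le_eucNorm _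
    calc |fvec A Γ a z i - lamstar| ≤ dist (fvec A Γ a z) (fvec A Γ a ustar) := by
          rw [← h2]; exact h1
      _ ≤ KF * dist z ustar := hd
      _ ≤ KF * eucNorm (z - ustar) := mul_le_mul_of_nonneg_left h3 hKF0
  have hρe : ρ ≤ (1+KF) * eucNorm e := by
    have h1 : |lam - lamstar| ≤ KF * eucNorm e := by
      have := hlamlip u hu_f
      rw [← hlamdef, ← hedef] at this
      exact this
    rw [hρdef]
    have := eucNorm_nonneg e
    linarith
  -- goal 2
  have hgoal2 : eucNorm (u' - ustar) ≤ d * eucNorm e ^ 2 := by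
    have h1 : ρ^2 ≤ ((1+KF) * eucNorm e)^2 := by
      apply pow_le_pow_left₀ hρ0 hρe
    have h2 : CF * ρ^2 ≤ CF * ((1+KF)^2 * eucNorm e^2) := by
      have hexp : ((1+KF) * eucNorm e)^2 = (1+KF)^2 * eucNorm e^2 := by ring
      rw [← hexp]
      exact mul_le_mul_of_nonneg_left h1 hCF0
    have h3 : CF * ((1+KF)^2 * eucNorm e^2) ≤ d * eucNorm e^2 := by
      have hcoef : CF * (1+KF)^2 ≤ d := by
        rw [hddef]
        have hk1 : (1:ℝ) ≤ 1 + KF := by linarith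
        have hp2 : (1+KF)^2 ≤ (1+KF)^3 := by
          calc (1+KF)^2 = 1*(1+KF)^2 := by ring
            _ ≤ (1+KF)*(1+KF)^2 := mul_le_mul_of_nonneg_right hk1 (sq_nonneg _)
            _ = (1+KF)^3 := by ring
        have h4 : CF*(1+KF)^2 ≤ CF*(1+KF)^3 := mul_le_mul_of_nonneg_left hp2 hCF0
        have h5 : CF*(1+KF)^3 ≤ (CF+1)*(1+KF)^3 :=
          mul_le_mul_of_nonneg_right (by linarith) (by positivity)
        linarith
      have hexp : CF * ((1+KF)^2 * eucNorm e^2) = (CF*(1+KF)^2) * eucNorm e^2 := by ring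
      rw [hexp]
      exact mul_le_mul_of_nonneg_right hcoef (sq_nonneg _)
    linarith [hu'CF]
  -- goal 3
  have hu'close : dist u' ustar < rf := by
    have h1 : dist u' ustar ≤ eucNorm (u' - ustar) := by
      rw [dist_eq_norm]; exact pi_norm_le_eucNorm _
    have h2 : ρ^2 ≤ ε*ρ := by
      have hh := mul_le_mul_of_nonneg_right hρε.le hρ0
      calc ρ^2 = ρ*ρ := sq ρ
        _ ≤ ε*ρ := hh
    have h3 : ε*ρ ≤ ε*1 := mul_le_mul_of_nonneg_left hρ1 hε0.le
    have h4 : CF * ρ^2 ≤ CF * ε := by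
      have := le_trans h2 (by linarith [h3] : ε*ρ ≤ ε)
      exact mul_le_mul_of_nonneg_left this hCF0
    have h5 : CF * ε ≤ CF * (rf/(CF+1)) := mul_le_mul_of_nonneg_left hεrfCF hCF0
    have h6 : CF * (rf/(CF+1)) < rf := by
      rw [mul_div_assoc']
      rw [div_lt_iff₀ (by linarith : (0:ℝ) < CF+1)]
      have hexp : rf*(CF+1) = CF*rf + rf := by ring
      linarith
    linarith [hu'CF]
  have hu'_f : u' ∈ tf := hballf (Metric.mem_ball.mpr hu'close)
  have hlamu' : |lamOf A Γ a u' - lamstar| ≤ KF * eucNorm (u' - ustar) := hlamlip u' hu'_f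
  have hgoal3 : eucNorm (u' - ustar) + |lamOf A Γ a u' - lamstar| ≤ d * ρ^2 := by
    have h1 : eucNorm (u' - ustar) + |lamOf A Γ a u' - lamstar|
        ≤ (1+KF) * eucNorm (u' - ustar) := by
      have hexp : (1+KF) * eucNorm (u' - ustar)
          = eucNorm (u' - ustar) + KF * eucNorm (u' - ustar) := by ring
      linarith [hlamu']
    have h2 : (1+KF) * eucNorm (u' - ustar) ≤ (1+KF) * (CF * ρ^2) :=
      mul_le_mul_of_nonneg_left hu'CF (by linarith)
    have h3 : (1+KF) * (CF * ρ^2) ≤ d * ρ^2 := by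
      have hcoef : (1+KF) * CF ≤ d := by
        rw [hddef]
        have hk1 : (1:ℝ) ≤ 1 + KF := by linarith
        have hp13 : (1+KF) ≤ (1+KF)^3 := by
          calc (1+KF) = (1+KF)^1 := (pow_one _).symm
            _ ≤ (1+KF)^3 := pow_le_pow_right₀ hk1 (by norm_num)
        have hs1 : (1+KF)*CF ≤ (1+KF)^3*CF := mul_le_mul_of_nonneg_right hp13 hCF0
        have hs2 : (1+KF)^3*CF ≤ (1+KF)^3*(CF+1) :=
          mul_le_mul_of_nonneg_left (by linarith) (by positivity)
        have hexp : (1+KF)^3*(CF+1) = (CF+1)*(1+KF)^3 := by ring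
        linarith
      have hexp : (1+KF) * (CF * ρ^2) = ((1+KF)*CF) * ρ^2 := by ring
      rw [hexp]
      exact mul_le_mul_of_nonneg_right hcoef (sq_nonneg ρ)
    linarith
  exact ⟨hgoal1, hgoal2, hgoal3⟩
end
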